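/- arXiv:2409.03027 — 7 statements merged into one kernel-verified Lean document; each statement's English description precedes it below -/
import Mathlib

section
/- Let T>0. Assume a:[0,T]→ℝ is differentiable with a and a' essentially bounded and inf_{t∈[0,T]} a(t) = a₀ > 0, and q:[0,T]→ℝ is essentially bounded. Then there exists C>0, independent of β, t, F and V, such that for every β ≥ 1, every continuous F:[0,T]→ℂ², and every continuously differentiable V:[0,T]→ℂ² satisfying V'(t) = iβ A(t) V(t) + iβ⁻¹ Q(t) V(t) + F(t) on [0,T], one has |V(t)|² ≤ C( |V(0)|² + ∫₀ᵀ |F(τ)|² dτ ) for all t ∈ [0,T]. -/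
open Set MeasureTheory

open scoped InnerProductSpace

private lemma cinner_eq (z w : ℂ) : ⟪z, w⟫_ℝ = z.re * w.re + z.im * w.im := by
  rw [Complex.inner]
  simp [Complex.mul_re]
  ring

private lemma my_gronwall {f f' : ℝ → ℝ} {δ K ε b : ℝ}
    (hf : ContinuousOn f (Icc 0 b))
    (hf' : ∀ x ∈ Ico 0 b, HasDerivWithinAt f (f' x) (Ici x) x)
    (h0 : f 0 ≤ δ) (bd : ∀ x ∈ Ico 0 b, f' x ≤ K * f x + ε) :
    ∀ x ∈ Icc 0 b, f x ≤ gronwallBound δ K ε x := by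
  intro x hx
  have h := le_gronwallBound_of_liminf_deriv_right_le hf
    (fun x hx r hr => ((hf' x hx).liminf_right_slope_le hr).mono
      (fun z hz => by simpa [slope_def_field, div_eq_inv_mul] using hz))
    h0 bd x hx
  simpa using h

set_option maxHeartbeats 1600000 in
/-- Energy estimate for the first-order system `V' = iβ A V + iβ⁻¹ Q V + F`,
where `A(t) = [[0,1],[a(t),0]]` and `Q(t) = [[0,0],[q(t)-a(t),0]]`, written componentwise. -/
theorem first_order_system_energy_estimate
    (T a₀ Ma Ma' Mq : ℝ) (hT : 0 < T) (ha₀ : 0 < a₀)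
    (a a' q : ℝ → ℝ)
    (ha_deriv : ∀ t ∈ Icc (0:ℝ) T, HasDerivAt a (a' t) t)
    (ha_bd : ∀ t ∈ Icc (0:ℝ) T, |a t| ≤ Ma)
    (ha'_bd : ∀ t ∈ Icc (0:ℝ) T, |a' t| ≤ Ma')
    (hq_bd : ∀ t ∈ Icc (0:ℝ) T, |q t| ≤ Mq)
    (ha_low : ∀ t ∈ Icc (0:ℝ) T, a₀ ≤ a t) :
    ∃ C > 0, ∀ β : ℝ, 1 ≤ β → ∀ F₁ F₂ V₁ V₂ : ℝ → ℂ,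
      ContinuousOn F₁ (Icc (0:ℝ) T) → ContinuousOn F₂ (Icc (0:ℝ) T) →
      (∀ t ∈ Icc (0:ℝ) T,
        HasDerivAt V₁ (Complex.I * (β : ℂ) * V₂ t + F₁ t) t) →
      (∀ t ∈ Icc (0:ℝ) T,
        HasDerivAt V₂ (Complex.I * (β : ℂ) * (a t : ℂ) * V₁ t
          + Complex.I * (β : ℂ)⁻¹ * ((q t : ℂ) - (a t : ℂ)) * V₁ t + F₂ t) t) →
      ∀ t ∈ Icc (0:ℝ) T,
        ‖V₁ t‖ ^ 2 + ‖V₂ t‖ ^ 2 ≤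
          C * (‖V₁ 0‖ ^ 2 + ‖V₂ 0‖ ^ 2 + ∫ τ in (0:ℝ)..T, (‖F₁ τ‖ ^ 2 + ‖F₂ τ‖ ^ 2)) := by
  have h0T : (0:ℝ) ∈ Icc (0:ℝ) T := ⟨le_refl 0, hT.le⟩
  have hMa : 0 < Ma := lt_of_lt_of_le ha₀
    ((ha_low 0 h0T).trans ((le_abs_self _).trans (ha_bd 0 h0T)))
  have hMa' : 0 ≤ Ma' := (abs_nonneg _).trans (ha'_bd 0 h0T)
  have hMq : 0 ≤ Mq := (abs_nonneg _).trans (hq_bd 0 h0T)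
  set c : ℝ := min a₀ 1 with hcdef
  have hc : 0 < c := lt_min ha₀ one_pos
  set K₀ : ℝ := Ma' + Ma ^ 2 + (Mq + Ma) + 1 with hK₀def
  have hK₀ : 0 < K₀ := by nlinarith
  set K : ℝ := K₀ / c with hKdef
  have hK : 0 < K := div_pos hK₀ hc
  set C : ℝ := Real.exp (K * T) * max Ma 1 / c with hCdef
  have hCpos : 0 < C := by
    apply div_pos _ hc
    exact mul_pos (Real.exp_pos _) (lt_max_of_lt_right one_pos)
  refine ⟨C, hCpos, ?_⟩
  intro β hβ F₁ F₂ V₁ V₂ hF₁ hF₂ hV₁ hV₂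
  have hβ0 : 0 < β := lt_of_lt_of_le one_pos hβ
  set G : ℝ → ℝ := fun τ => ‖F₁ τ‖ ^ 2 + ‖F₂ τ‖ ^ 2 with hGdef
  have hGcont : ContinuousOn G (Icc (0:ℝ) T) :=
    ((hF₁.norm.pow 2).add (hF₂.norm.pow 2))
  have hGnn : ∀ τ, 0 ≤ G τ := fun τ => by positivity
  have hGintOn : IntegrableOn G (Icc (0:ℝ) T) volume :=
    hGcont.integrableOn_Icc
  have hGint : IntervalIntegrable G volume 0 T := by
    rw [intervalIntegrable_iff_integrableOn_Icc_of_le hT.le]; exact hGintOn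
  set IG : ℝ := ∫ τ in (0:ℝ)..T, G τ with hIGdef
  have hIGnn : 0 ≤ IG :=
    intervalIntegral.integral_nonneg hT.le (fun u _ => hGnn u)
  set Φ : ℝ → ℝ := fun t => ∫ τ in (0:ℝ)..t, G τ with hΦdef
  have hΦint : ∀ t ∈ Icc (0:ℝ) T, IntervalIntegrable G volume 0 t := by
    intro t ht
    refine hGint.mono_set ?_
    rw [uIcc_of_le ht.1, uIcc_of_le hT.le]
    exact Icc_subset_Icc le_rfl ht.2
  have hΦle : ∀ t ∈ Icc (0:ℝ) T, Φ t ≤ IG := by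
    intro t ht
    have h2 : IntervalIntegrable G volume t T := by
      refine hGint.mono_set ?_
      rw [uIcc_of_le ht.2, uIcc_of_le hT.le]
      exact Icc_subset_Icc ht.1 le_rfl
    have hadd := intervalIntegral.integral_add_adjacent_intervals (hΦint t ht) h2
    have hpos : 0 ≤ ∫ τ in t..T, G τ :=
      intervalIntegral.integral_nonneg ht.2 (fun u _ => hGnn u)
    simp only [hΦdef, hIGdef]
    linarith [hadd, hpos]
  have hΦcont : ContinuousOn Φ (Icc (0:ℝ) T) := by
    have := intervalIntegral.continuousOn_primitive_interval (a := (0:ℝ)) (b := T)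
      (μ := volume) (f := G) (by rwa [uIcc_of_le hT.le])
    rwa [uIcc_of_le hT.le] at this
  have hΦderiv : ∀ t ∈ Ico (0:ℝ) T, HasDerivWithinAt Φ (G t) (Ici t) t := by
    intro t ht
    have hmem : Icc (0:ℝ) T ∈ nhdsWithin t (Ioi t) :=
      mem_nhdsWithin.2 ⟨Iio T, isOpen_Iio, ht.2,
        fun z hz => ⟨ht.1.trans hz.2.le, hz.1.le⟩⟩
    have hcts : ContinuousWithinAt G (Ioi t) t :=
      (hGcont t ⟨ht.1, ht.2.le⟩).mono_of_mem_nhdsWithin hmem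
    have hmeas : StronglyMeasurableAtFilter G (nhdsWithin t (Ioi t)) :=
      ⟨Icc 0 T, hmem, hGcont.aestronglyMeasurable measurableSet_Icc⟩
    exact intervalIntegral.integral_hasDerivWithinAt_right (hΦint t ⟨ht.1, ht.2.le⟩)
      hmeas hcts
  set E : ℝ → ℝ := fun t => a t * ‖V₁ t‖ ^ 2 + ‖V₂ t‖ ^ 2 with hEdef
  set D : ℝ → ℝ := fun t =>
    a' t * ‖V₁ t‖ ^ 2
    + a t * (2 * ⟪Complex.I * (β : ℂ) * V₂ t + F₁ t, V₁ t⟫_ℝ)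
    + 2 * ⟪Complex.I * (β : ℂ) * (a t : ℂ) * V₁ t
        + Complex.I * (β : ℂ)⁻¹ * ((q t : ℂ) - (a t : ℂ)) * V₁ t + F₂ t, V₂ t⟫_ℝ
    with hDdef
  have hEderiv : ∀ t ∈ Icc (0:ℝ) T, HasDerivAt E (D t) t := by
    intro t ht
    have h1 : HasDerivAt (fun s => ‖V₁ s‖ ^ 2)
        (2 * ⟪Complex.I * (β : ℂ) * V₂ t + F₁ t, V₁ t⟫_ℝ) t := by
      have h := (hV₁ t ht).inner ℝ (hV₁ t ht)
      simp only [real_inner_self_eq_norm_sq] at h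
      refine h.congr_deriv ?_
      rw [real_inner_comm]; ring
    have h2 : HasDerivAt (fun s => ‖V₂ s‖ ^ 2)
        (2 * ⟪Complex.I * (β : ℂ) * (a t : ℂ) * V₁ t
          + Complex.I * (β : ℂ)⁻¹ * ((q t : ℂ) - (a t : ℂ)) * V₁ t + F₂ t, V₂ t⟫_ℝ) t := by
      have h := (hV₂ t ht).inner ℝ (hV₂ t ht)
      simp only [real_inner_self_eq_norm_sq] at h
      refine h.congr_deriv ?_
      rw [real_inner_comm]; ring
    exact ((ha_deriv t ht).mul h1).add h2
  have hEpos : ∀ t ∈ Icc (0:ℝ) T, c * (‖V₁ t‖ ^ 2 + ‖V₂ t‖ ^ 2) ≤ E t := by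
    intro t ht
    have h1 : c ≤ a t := (min_le_left _ _).trans (ha_low t ht)
    have h2 : c ≤ 1 := min_le_right _ _
    have h3 : (0:ℝ) ≤ ‖V₁ t‖ ^ 2 := sq_nonneg _
    have h4 : (0:ℝ) ≤ ‖V₂ t‖ ^ 2 := sq_nonneg _
    simp only [hEdef]
    nlinarith
  have hDbd : ∀ t ∈ Icc (0:ℝ) T, D t ≤ K * E t + G t := by
    intro t ht
    have hc1 : D t = a' t * ‖V₁ t‖ ^ 2 + 2 * a t * ⟪F₁ t, V₁ t⟫_ℝ
        + 2 * (β⁻¹ * (q t - a t)) * ⟪Complex.I * V₁ t, V₂ t⟫_ℝ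
        + 2 * ⟪F₂ t, V₂ t⟫_ℝ := by
      simp only [hDdef, cinner_eq, ← Complex.ofReal_inv, Complex.add_re, Complex.add_im,
        Complex.mul_re, Complex.mul_im, Complex.I_re, Complex.I_im, Complex.ofReal_re,
        Complex.ofReal_im, Complex.sub_re, Complex.sub_im]
      ring
    have habs1 : |⟪F₁ t, V₁ t⟫_ℝ| ≤ ‖F₁ t‖ * ‖V₁ t‖ := abs_real_inner_le_norm _ _
    have habs2 : |⟪Complex.I * V₁ t, V₂ t⟫_ℝ| ≤ ‖V₁ t‖ * ‖V₂ t‖ := by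
      have := abs_real_inner_le_norm (Complex.I * V₁ t) (V₂ t)
      simpa [norm_mul] using this
    have habs3 : |⟪F₂ t, V₂ t⟫_ℝ| ≤ ‖F₂ t‖ * ‖V₂ t‖ := abs_real_inner_le_norm _ _
    have hat := ha_bd t ht
    have ha't := ha'_bd t ht
    have hqt := hq_bd t ht
    have hβinv : β⁻¹ ≤ 1 := by
      rw [inv_le_one_iff₀]; right; exact hβ
    have hβinvpos : 0 < β⁻¹ := inv_pos.2 hβ0
    have hqa : |β⁻¹ * (q t - a t)| ≤ Mq + Ma := by
      rw [abs_mul, abs_of_pos hβinvpos]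
      calc β⁻¹ * |q t - a t| ≤ 1 * |q t - a t| :=
            mul_le_mul_of_nonneg_right hβinv (abs_nonneg _)
        _ = |q t - a t| := one_mul _
        _ ≤ |q t| + |a t| := abs_sub _ _
        _ ≤ Mq + Ma := add_le_add hqt hat
    -- individual term bounds
    have t1 : a' t * ‖V₁ t‖ ^ 2 ≤ Ma' * ‖V₁ t‖ ^ 2 :=
      mul_le_mul_of_nonneg_right ((le_abs_self _).trans ha't) (sq_nonneg _)
    have t2 : 2 * a t * ⟪F₁ t, V₁ t⟫_ℝ ≤ 2 * (Ma * (‖F₁ t‖ * ‖V₁ t‖)) := by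
      have : a t * ⟪F₁ t, V₁ t⟫_ℝ ≤ Ma * (‖F₁ t‖ * ‖V₁ t‖) := by
        calc a t * ⟪F₁ t, V₁ t⟫_ℝ ≤ |a t * ⟪F₁ t, V₁ t⟫_ℝ| := le_abs_self _
          _ = |a t| * |⟪F₁ t, V₁ t⟫_ℝ| := abs_mul _ _
          _ ≤ Ma * (‖F₁ t‖ * ‖V₁ t‖) :=
              mul_le_mul hat habs1 (abs_nonneg _) hMa.le
      linarith
    have t2' : 2 * (Ma * (‖F₁ t‖ * ‖V₁ t‖)) ≤ Ma ^ 2 * ‖V₁ t‖ ^ 2 + ‖F₁ t‖ ^ 2 := by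
      nlinarith [sq_nonneg (Ma * ‖V₁ t‖ - ‖F₁ t‖)]
    have t3 : 2 * (β⁻¹ * (q t - a t)) * ⟪Complex.I * V₁ t, V₂ t⟫_ℝ
        ≤ 2 * ((Mq + Ma) * (‖V₁ t‖ * ‖V₂ t‖)) := by
      have : (β⁻¹ * (q t - a t)) * ⟪Complex.I * V₁ t, V₂ t⟫_ℝ
          ≤ (Mq + Ma) * (‖V₁ t‖ * ‖V₂ t‖) := by
        calc (β⁻¹ * (q t - a t)) * ⟪Complex.I * V₁ t, V₂ t⟫_ℝ
            ≤ |(β⁻¹ * (q t - a t)) * ⟪Complex.I * V₁ t, V₂ t⟫_ℝ| := le_abs_self _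
          _ = |β⁻¹ * (q t - a t)| * |⟪Complex.I * V₁ t, V₂ t⟫_ℝ| := abs_mul _ _
          _ ≤ (Mq + Ma) * (‖V₁ t‖ * ‖V₂ t‖) :=
              mul_le_mul hqa habs2 (abs_nonneg _) (by linarith)
      linarith
    have t3' : 2 * ((Mq + Ma) * (‖V₁ t‖ * ‖V₂ t‖))
        ≤ (Mq + Ma) * (‖V₁ t‖ ^ 2 + ‖V₂ t‖ ^ 2) := by
      nlinarith [sq_nonneg (‖V₁ t‖ - ‖V₂ t‖), hMq, hMa.le]
    have t4 : 2 * ⟪F₂ t, V₂ t⟫_ℝ ≤ ‖V₂ t‖ ^ 2 + ‖F₂ t‖ ^ 2 := by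
      nlinarith [sq_nonneg (‖V₂ t‖ - ‖F₂ t‖), (le_abs_self ⟪F₂ t, V₂ t⟫_ℝ).trans habs3]
    have hstep : D t ≤ K₀ * (‖V₁ t‖ ^ 2 + ‖V₂ t‖ ^ 2) + G t := by
      rw [hc1]
      have hexp : K₀ * (‖V₁ t‖ ^ 2 + ‖V₂ t‖ ^ 2)
          = Ma' * ‖V₁ t‖ ^ 2 + Ma' * ‖V₂ t‖ ^ 2
          + Ma ^ 2 * ‖V₁ t‖ ^ 2 + Ma ^ 2 * ‖V₂ t‖ ^ 2
          + (Mq + Ma) * (‖V₁ t‖ ^ 2 + ‖V₂ t‖ ^ 2)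
          + ‖V₁ t‖ ^ 2 + ‖V₂ t‖ ^ 2 := by
        rw [hK₀def]; ring
      have hn1 : 0 ≤ Ma' * ‖V₂ t‖ ^ 2 := mul_nonneg hMa' (sq_nonneg _)
      have hn2 : 0 ≤ Ma ^ 2 * ‖V₂ t‖ ^ 2 := mul_nonneg (sq_nonneg _) (sq_nonneg _)
      have hn3 : 0 ≤ ‖V₁ t‖ ^ 2 := sq_nonneg _
      simp only [hGdef]
      linarith
    have hfin : K₀ * (‖V₁ t‖ ^ 2 + ‖V₂ t‖ ^ 2) ≤ K * E t := by
      have h1 := mul_le_mul_of_nonneg_left (hEpos t ht) hK.le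
      calc K₀ * (‖V₁ t‖ ^ 2 + ‖V₂ t‖ ^ 2)
          = K * (c * (‖V₁ t‖ ^ 2 + ‖V₂ t‖ ^ 2)) := by
            rw [hKdef]; field_simp
        _ ≤ K * E t := h1
    linarith
  have hEcont : ContinuousOn E (Icc (0:ℝ) T) := fun t ht =>
    (((ha_deriv t ht).continuousAt.mul
        (((hV₁ t ht).continuousAt.norm).pow 2)).add
      (((hV₂ t ht).continuousAt.norm).pow 2)).continuousWithinAt
  set H : ℝ → ℝ := fun t => E t - Φ t with hHdef
  have hHcont : ContinuousOn H (Icc (0:ℝ) T) := hEcont.sub hΦcont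
  have hH0 : H 0 ≤ E 0 := by
    simp [hHdef, hΦdef, intervalIntegral.integral_same]
  have hHderiv : ∀ t ∈ Ico (0:ℝ) T, HasDerivWithinAt H (D t - G t) (Ici t) t :=
    fun t ht => ((hEderiv t ⟨ht.1, ht.2.le⟩).hasDerivWithinAt).sub (hΦderiv t ht)
  have hHbd : ∀ t ∈ Ico (0:ℝ) T, D t - G t ≤ K * H t + K * IG := by
    intro t ht
    have h1 := hDbd t ⟨ht.1, ht.2.le⟩
    have h2 := hΦle t ⟨ht.1, ht.2.le⟩
    have h3 : K * Φ t ≤ K * IG := mul_le_mul_of_nonneg_left h2 hK.le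
    have h4 : E t = H t + Φ t := by simp [hHdef]
    nlinarith
  have hHle := my_gronwall hHcont hHderiv hH0 hHbd
  have hE0nn : 0 ≤ E 0 := by
    have := hEpos 0 h0T
    nlinarith [sq_nonneg ‖V₁ 0‖, sq_nonneg ‖V₂ 0‖, hc]
  have hEbound : ∀ t ∈ Icc (0:ℝ) T, E t ≤ Real.exp (K * T) * (E 0 + IG) := by
    intro t ht
    have h1 := hHle t ht
    have h2 := hΦle t ht
    rw [gronwallBound_of_K_ne_0 hK.ne'] at h1
    have h3 : K * IG / K = IG := by field_simp
    rw [h3] at h1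
    have h4 : Real.exp (K * t) ≤ Real.exp (K * T) :=
      Real.exp_le_exp.2 (mul_le_mul_of_nonneg_left ht.2 hK.le)
    have h5 : E t = H t + Φ t := by simp [hHdef]
    have h6 : 0 < Real.exp (K * t) := Real.exp_pos _
    have h1' : H t ≤ E 0 * Real.exp (K * t) + IG * (Real.exp (K * t) - 1) := by
      simpa using h1
    linarith [mul_le_mul_of_nonneg_left h4 hE0nn, mul_le_mul_of_nonneg_left h4 hIGnn]
  intro t ht
  have h1 := hEpos t ht
  have h2 := hEbound t ht
  have hE0le : E 0 ≤ max Ma 1 * (‖V₁ 0‖ ^ 2 + ‖V₂ 0‖ ^ 2) := by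
    have ha0 : a 0 ≤ max Ma 1 :=
      ((le_abs_self _).trans (ha_bd 0 h0T)).trans (le_max_left _ _)
    have hm1 : (1:ℝ) ≤ max Ma 1 := le_max_right _ _
    simp only [hEdef]
    nlinarith [sq_nonneg ‖V₁ 0‖, sq_nonneg ‖V₂ 0‖]
  have hcC : c * C = Real.exp (K * T) * max Ma 1 := by
    rw [hCdef]; field_simp
  have hmax1 : (1:ℝ) ≤ max Ma 1 := le_max_right _ _
  have hexppos : (0:ℝ) < Real.exp (K * T) := Real.exp_pos _
  have key : c * (‖V₁ t‖ ^ 2 + ‖V₂ t‖ ^ 2)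
      ≤ c * (C * (‖V₁ 0‖ ^ 2 + ‖V₂ 0‖ ^ 2 + IG)) := by
    have hE0IG : E 0 + IG ≤ max Ma 1 * (‖V₁ 0‖ ^ 2 + ‖V₂ 0‖ ^ 2 + IG) := by
      nlinarith
    have : Real.exp (K * T) * (E 0 + IG)
        ≤ Real.exp (K * T) * (max Ma 1 * (‖V₁ 0‖ ^ 2 + ‖V₂ 0‖ ^ 2 + IG)) :=
      mul_le_mul_of_nonneg_left hE0IG hexppos.le
    calc c * (‖V₁ t‖ ^ 2 + ‖V₂ t‖ ^ 2) ≤ E t := h1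
      _ ≤ Real.exp (K * T) * (E 0 + IG) := h2
      _ ≤ Real.exp (K * T) * (max Ma 1 * (‖V₁ 0‖ ^ 2 + ‖V₂ 0‖ ^ 2 + IG)) := this
      _ = c * (C * (‖V₁ 0‖ ^ 2 + ‖V₂ 0‖ ^ 2 + IG)) := by rw [← mul_assoc, ← hcC]; ring
  have := le_of_mul_le_mul_left key hc
  simpa [hIGdef, hGdef] using this
end

section
/- Let T>0, let a:[0,T]→ℝ be differentiable with a and a' essentially bounded, and let q:[0,T]→ℝ be essentially bounded. Let β ≥ 1, let F:[0,T]→ℂ² be continuous, and let V:[0,T]→ℂ² be continuously differentiable with V'(t) = iβ A(t) V(t) + iβ⁻¹ Q(t) V(t) + F(t) on [0,T]. Define the energy E(t) = ⟨S(t)V(t), V(t)⟩ = a(t)|V₁(t)|² + |V₂(t)|². Then for almost every t ∈ [0,T], E'(t) ≤ (1 + ‖a'‖_{L^∞} + 2‖a‖_{L^∞} + ‖q‖_{L^∞}) |V(t)|² + (1 + ‖a‖_{L^∞}) |F(t)|². -/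
open Set MeasureTheory

theorem key_ineq (Ma Ma' Mq α α' Q b p p' u v f g h k : ℝ)
    (h1 : |α| ≤ Ma) (h2 : |α'| ≤ Ma') (h3 : |Q| ≤ Mq) (hb0 : 0 < b) (hb1 : b ≤ 1) :
    α' * (p^2 + p'^2) + 2*α*(f*p + g*p') - 2*b*(Q-α)*(p'*u - p*v) + 2*(h*u + k*v)
      ≤ (1 + Ma' + 2*Ma + Mq) * (p^2 + p'^2 + u^2 + v^2) + (1 + Ma) * (f^2 + g^2 + h^2 + k^2) := by
  have hMa : 0 ≤ Ma := (abs_nonneg α).trans h1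
  have hMa' : 0 ≤ Ma' := (abs_nonneg α').trans h2
  have hMq : 0 ≤ Mq := (abs_nonneg Q).trans h3
  have hc : |b*(Q-α)| ≤ Mq + Ma := by
    rw [abs_mul, abs_of_pos hb0]
    calc b * |Q - α| ≤ 1 * |Q - α| := mul_le_mul_of_nonneg_right hb1 (abs_nonneg _)
      _ = |Q - α| := one_mul _
      _ ≤ |Q| + |α| := abs_sub _ _
      _ ≤ Mq + Ma := add_le_add h3 h1
  rw [abs_le] at h1 h2 hc
  have T1 : α' * (p^2 + p'^2) ≤ Ma' * (p^2 + p'^2) :=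
    mul_le_mul_of_nonneg_right h2.2 (by positivity)
  have T2 : 2*α*(f*p + g*p') ≤ Ma * (f^2 + p^2 + g^2 + p'^2) := by
    nlinarith [mul_nonneg (sub_nonneg.2 h1.2) (sq_nonneg (f-p)),
      mul_nonneg (sub_nonneg.2 h1.2) (sq_nonneg (g-p')),
      mul_nonneg (by linarith : (0:ℝ) ≤ Ma + α) (sq_nonneg (f+p)),
      mul_nonneg (by linarith : (0:ℝ) ≤ Ma + α) (sq_nonneg (g+p'))]
  have T3 : -(2*b*(Q-α)*(p'*u - p*v)) ≤ (Mq + Ma) * (p^2 + p'^2 + u^2 + v^2) := by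
    nlinarith [mul_nonneg (sub_nonneg.2 hc.2) (sq_nonneg (p'+u)),
      mul_nonneg (by linarith : (0:ℝ) ≤ (Mq+Ma) + b*(Q-α)) (sq_nonneg (p'-u)),
      mul_nonneg (sub_nonneg.2 hc.2) (sq_nonneg (p-v)),
      mul_nonneg (by linarith : (0:ℝ) ≤ (Mq+Ma) + b*(Q-α)) (sq_nonneg (p+v))]
  have T4 : 2*(h*u + k*v) ≤ u^2 + v^2 + h^2 + k^2 := by
    nlinarith [sq_nonneg (h-u), sq_nonneg (k-v)]
  nlinarith [mul_nonneg hMa' (add_nonneg (sq_nonneg u) (sq_nonneg v)),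
    mul_nonneg hMa (add_nonneg (sq_nonneg h) (sq_nonneg k)),
    mul_nonneg hMa (add_nonneg (sq_nonneg u) (sq_nonneg v)),
    mul_nonneg hMq (add_nonneg (sq_nonneg f) (sq_nonneg g)),
    sq_nonneg p, sq_nonneg p', sq_nonneg f, sq_nonneg g,
    mul_nonneg hMq (add_nonneg (sq_nonneg h) (sq_nonneg k))]

theorem normSq_re_eq (z : ℂ) : ‖z‖^2 = (z * (starRingEnd ℂ) z).re := by
  rw [Complex.mul_conj]
  simp [Complex.normSq_eq_norm_sq, ← Complex.ofReal_pow]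

theorem hasDerivAt_normSq (V : ℝ → ℂ) (d : ℂ) (t : ℝ) (h : HasDerivAt V d t) :
    HasDerivAt (fun τ => (V τ * (starRingEnd ℂ) (V τ)).re)
      ((d * (starRingEnd ℂ) (V t) + V t * (starRingEnd ℂ) d).re) t :=
  Complex.reCLM.hasFDerivAt.comp_hasDerivAt t (h.mul h.star)

/-- Derivative estimate for the energy `E(t) = a(t)|V₁(t)|² + |V₂(t)|²` of the first-order
system `V' = iβ A V + iβ⁻¹ Q V + F` (written componentwise). -/
theorem energy_derivative_estimate
    (T Ma Ma' Mq : ℝ) (hT : 0 < T)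
    (a a' q : ℝ → ℝ)
    (ha_deriv : ∀ t ∈ Icc (0:ℝ) T, HasDerivAt a (a' t) t)
    (ha_bd : ∀ t ∈ Icc (0:ℝ) T, |a t| ≤ Ma)
    (ha'_bd : ∀ t ∈ Icc (0:ℝ) T, |a' t| ≤ Ma')
    (hq_bd : ∀ t ∈ Icc (0:ℝ) T, |q t| ≤ Mq)
    (β : ℝ) (hβ : 1 ≤ β)
    (F₁ F₂ V₁ V₂ : ℝ → ℂ)
    (hF₁ : ContinuousOn F₁ (Icc (0:ℝ) T)) (hF₂ : ContinuousOn F₂ (Icc (0:ℝ) T))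
    (hV₁ : ∀ t ∈ Icc (0:ℝ) T,
      HasDerivAt V₁ (Complex.I * (β : ℂ) * V₂ t + F₁ t) t)
    (hV₂ : ∀ t ∈ Icc (0:ℝ) T,
      HasDerivAt V₂ (Complex.I * (β : ℂ) * (a t : ℂ) * V₁ t
        + Complex.I * (β : ℂ)⁻¹ * ((q t : ℂ) - (a t : ℂ)) * V₁ t + F₂ t) t) :
    ∀ᵐ t ∂(volume.restrict (Icc (0:ℝ) T)),
      deriv (fun τ => a τ * ‖V₁ τ‖ ^ 2 + ‖V₂ τ‖ ^ 2) t ≤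
        (1 + Ma' + 2 * Ma + Mq) * (‖V₁ t‖ ^ 2 + ‖V₂ t‖ ^ 2)
          + (1 + Ma) * (‖F₁ t‖ ^ 2 + ‖F₂ t‖ ^ 2) := by
  refine (ae_restrict_iff' measurableSet_Icc).2 (ae_of_all _ ?_)
  intro t ht
  have hβ0 : (0:ℝ) < β⁻¹ := inv_pos.2 (lt_of_lt_of_le one_pos hβ)
  have hβ1 : β⁻¹ ≤ 1 := inv_le_one_of_one_le₀ hβ
  have hd1 := hV₁ t ht
  have hd2 := hV₂ t ht
  have hda := ha_deriv t ht
  have hr1 := hasDerivAt_normSq V₁ _ t hd1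
  have hr2 := hasDerivAt_normSq V₂ _ t hd2
  have hsum := (hda.mul hr1).add hr2
  have hfun : (fun τ => a τ * ‖V₁ τ‖ ^ 2 + ‖V₂ τ‖ ^ 2)
      = (fun τ => a τ * (V₁ τ * (starRingEnd ℂ) (V₁ τ)).re
          + (V₂ τ * (starRingEnd ℂ) (V₂ τ)).re) := by
    funext τ; rw [normSq_re_eq, normSq_re_eq]
  rw [hfun, HasDerivAt.deriv (f := fun τ => a τ * (V₁ τ * (starRingEnd ℂ) (V₁ τ)).re
      + (V₂ τ * (starRingEnd ℂ) (V₂ τ)).re) hsum]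
  have key := key_ineq Ma Ma' Mq (a t) (a' t) (q t) β⁻¹
    (V₁ t).re (V₁ t).im (V₂ t).re (V₂ t).im
    (F₁ t).re (F₁ t).im (F₂ t).re (F₂ t).im
    (ha_bd t ht) (ha'_bd t ht) (hq_bd t ht) hβ0 hβ1
  have hβc : ((β:ℂ))⁻¹ = ((β⁻¹:ℝ):ℂ) := by push_cast; ring
  rw [hβc]
  simp only [normSq_re_eq, Complex.add_re, Complex.add_im, Complex.mul_re, Complex.mul_im,
    Complex.sub_re, Complex.sub_im, Complex.conj_re, Complex.conj_im,
    Complex.I_re, Complex.I_im, Complex.ofReal_re, Complex.ofReal_im,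
    Complex.normSq_apply]
  nlinarith [key]
end

section
/- Let T>0, 0<α<1, a₀>0, and let a:ℝ→ℝ be Hölder continuous of order α with a(t) ≥ a₀ for all t. Let ψ be a mollifier supported in [0,T], λ^ε = √a * ψ_ε, and H(t) = [[1,1],[−λ^ε(t), λ^ε(t)]]. Then H(t) is invertible and there exists C > 0, depending only on α, a₀, ‖a‖_{C^α}, T and ψ, such that the operator norm satisfies ‖H(t)⁻¹ (d/dt)H(t)‖ ≤ C ε^{α−1} for all t ∈ [0,T] and all ε ∈ (0,1]. -/
open Set MeasureTheory Matrix

/-- The regularisation `λ^ε = √a * ψ_ε` of the square root of the propagation speed: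
`λ^ε(t) = ∫ √(a(t - εx)) ψ(x) dx`. -/
noncomputable def lamEps (a ψ : ℝ → ℝ) (ε t : ℝ) : ℝ :=
  ∫ x, Real.sqrt (a (t - ε * x)) * ψ x

/-- The matrix `H(t) = [[1,1],[-λ^ε(t),λ^ε(t)]]`. -/
noncomputable def Hmat (a ψ : ℝ → ℝ) (ε t : ℝ) : Matrix (Fin 2) (Fin 2) ℝ :=
  !![1, 1; -lamEps a ψ ε t, lamEps a ψ ε t]

/-- The entrywise time derivative `(d/dt)H(t) = [[0,0],[-(λ^ε)'(t),(λ^ε)'(t)]]`. -/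
noncomputable def HmatDeriv (a ψ : ℝ → ℝ) (ε t : ℝ) : Matrix (Fin 2) (Fin 2) ℝ :=
  !![0, 0; -deriv (lamEps a ψ ε) t, deriv (lamEps a ψ ε) t]

open scoped Convolution

/-- Change of variables for the mollified integral. -/
theorem cov_aux' (g θ : ℝ → ℝ) {ε : ℝ} (hε : 0 < ε) (t : ℝ) :
    ∫ s, g s * (ε⁻¹ * θ (ε⁻¹ * (t - s))) = ∫ x, g (t - ε * x) * θ x := by
  have h1 : ∫ s, g s * (ε⁻¹ * θ (ε⁻¹ * (t - s)))
      = ∫ s, g (t - s) * (ε⁻¹ * θ (ε⁻¹ * s)) := by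
    rw [← integral_sub_left_eq_self (fun s => g (t - s) * (ε⁻¹ * θ (ε⁻¹ * s))) volume t]
    simp [sub_sub_cancel]
  have h2 := MeasureTheory.Measure.integral_comp_mul_left
    (fun s => g (t - s) * (ε⁻¹ * θ (ε⁻¹ * s))) ε
  have h3 : ∀ x : ℝ, ε⁻¹ * (ε * x) = x := fun x => inv_mul_cancel_left₀ hε.ne' x
  simp only [h3, abs_of_pos (inv_pos.2 hε), smul_eq_mul] at h2
  simp_rw [show ∀ p q : ℝ, p * (ε⁻¹ * q) = ε⁻¹ * (p * q) from fun p q => mul_left_comm p ε⁻¹ q,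
    integral_const_mul] at h2
  rw [h1]
  simp_rw [show ∀ p q : ℝ, p * (ε⁻¹ * q) = ε⁻¹ * (p * q) from fun p q => mul_left_comm p ε⁻¹ q,
    integral_const_mul]
  exact (mul_left_cancel₀ (inv_ne_zero hε.ne') h2).symm

/-- Difference of square roots bound. -/
theorem sqrt_diff_le' {a₀ u v : ℝ} (ha₀ : 0 < a₀) (hu : a₀ ≤ u) (hv : a₀ ≤ v) :
    |Real.sqrt u - Real.sqrt v| ≤ |u - v| / (2 * Real.sqrt a₀) := by
  have hs : 0 < Real.sqrt a₀ := Real.sqrt_pos.2 ha₀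
  have hu0 : (0:ℝ) ≤ u := le_trans ha₀.le hu
  have hv0 : (0:ℝ) ≤ v := le_trans ha₀.le hv
  have h1 : Real.sqrt a₀ ≤ Real.sqrt u := Real.sqrt_le_sqrt hu
  have h2 : Real.sqrt a₀ ≤ Real.sqrt v := Real.sqrt_le_sqrt hv
  have hsum0 : 0 < Real.sqrt u + Real.sqrt v := by linarith
  have hmul : (Real.sqrt u - Real.sqrt v) * (Real.sqrt u + Real.sqrt v) = u - v := by
    nlinarith [Real.sq_sqrt hu0, Real.sq_sqrt hv0]
  have key : |Real.sqrt u - Real.sqrt v| * (Real.sqrt u + Real.sqrt v) = |u - v| := by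
    rw [← abs_of_pos hsum0, ← abs_mul, hmul]
  rw [le_div_iff₀ (by positivity)]
  calc |Real.sqrt u - Real.sqrt v| * (2 * Real.sqrt a₀)
      ≤ |Real.sqrt u - Real.sqrt v| * (Real.sqrt u + Real.sqrt v) :=
        mul_le_mul_of_nonneg_left (by linarith) (abs_nonneg _)
    _ = |u - v| := key

/-- A Hölder continuous function is continuous. -/
theorem cont_of_holder' (α M : ℝ) (hα0 : 0 < α) (a : ℝ → ℝ)
    (hHol : ∀ t s : ℝ, |a t - a s| ≤ M * |t - s| ^ α) : Continuous a := by
  have hM : 0 ≤ M := by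
    have h := hHol 1 0
    simp at h
    exact le_trans (abs_nonneg _) h
  rw [Metric.continuous_iff]
  intro t δ hδ
  refine ⟨(δ / (M + 1)) ^ (1 / α), Real.rpow_pos_of_pos (by positivity) _, fun s hs => ?_⟩
  have hds : |s - t| < (δ / (M + 1)) ^ (1 / α) := hs
  have h1 : |s - t| ^ α < ((δ / (M + 1)) ^ (1 / α)) ^ α :=
    Real.rpow_lt_rpow (abs_nonneg _) hds hα0
  have h2 : ((δ / (M + 1) : ℝ) ^ (1 / α)) ^ α = δ / (M + 1) := by
    rw [← Real.rpow_mul (by positivity), one_div, inv_mul_cancel₀ hα0.ne', Real.rpow_one]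
  rw [h2] at h1
  calc dist (a s) (a t) = |a s - a t| := Real.dist_eq _ _
    _ ≤ M * |s - t| ^ α := hHol s t
    _ ≤ (M + 1) * |s - t| ^ α := by
        have := Real.rpow_nonneg (abs_nonneg (s - t)) α
        nlinarith
    _ < (M + 1) * (δ / (M + 1)) := mul_lt_mul_of_pos_left h1 (by positivity)
    _ = δ := by field_simp

/-- The mollified function is differentiable, with derivative obtained by
putting the derivative on the mollifier. -/
theorem lam_hasDerivAt' (T : ℝ) (a : ℝ → ℝ) (ha_cont : Continuous a)
    (ψ : ℝ → ℝ) (hψ_smooth : ContDiff ℝ (⊤ : ℕ∞) ψ)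
    (hψ_supp : tsupport ψ ⊆ Icc (0:ℝ) T)
    {ε : ℝ} (hε : 0 < ε) (t : ℝ) :
    HasDerivAt (lamEps a ψ ε)
      (ε⁻¹ * ∫ x, Real.sqrt (a (t - ε * x)) * deriv ψ x) t := by
  have hψc : HasCompactSupport ψ :=
    IsCompact.of_isClosed_subset isCompact_Icc (isClosed_tsupport ψ) hψ_supp
  set g : ℝ → ℝ := fun s => Real.sqrt (a s) with hg_def
  have hg_cont : Continuous g := Real.continuous_sqrt.comp ha_cont
  have hg_loc : LocallyIntegrable g volume := hg_cont.locallyIntegrable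
  set φ : ℝ → ℝ := fun u => ε⁻¹ * ψ (ε⁻¹ * u) with hφ_def
  have hψ1 : ContDiff ℝ 1 ψ := hψ_smooth.of_le (by exact_mod_cast le_top)
  have hφ_smooth : ContDiff ℝ 1 φ :=
    contDiff_const.mul (hψ1.comp (contDiff_const.mul contDiff_id))
  have hφc : HasCompactSupport φ := by
    apply IsCompact.of_isClosed_subset (isCompact_Icc (a := 0) (b := ε * T))
      (isClosed_tsupport φ)
    apply closure_minimal _ isClosed_Icc
    intro u hu
    have hψu : ψ (ε⁻¹ * u) ≠ 0 := by
      intro h; apply hu; simp [hφ_def, h]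
    have : ε⁻¹ * u ∈ Icc (0:ℝ) T := hψ_supp (subset_closure hψu)
    have hu0 : u = ε * (ε⁻¹ * u) := (mul_inv_cancel_left₀ hε.ne' u).symm
    rw [hu0]
    exact ⟨mul_nonneg hε.le this.1, mul_le_mul_of_nonneg_left this.2 hε.le⟩
  have hφd : ∀ u, deriv φ u = ε⁻¹ * (ε⁻¹ * deriv ψ (ε⁻¹ * u)) := by
    intro u
    have h1 : HasDerivAt (fun w : ℝ => ε⁻¹ * w) ε⁻¹ u := by
      simpa using (hasDerivAt_id u).const_mul ε⁻¹
    have h2 : HasDerivAt ψ (deriv ψ (ε⁻¹ * u)) (ε⁻¹ * u) :=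
      ((hψ1.differentiable one_ne_zero) (ε⁻¹ * u)).hasDerivAt
    have h4 := (h2.comp u h1).const_mul ε⁻¹
    have h5 := (show HasDerivAt φ (ε⁻¹ * (deriv ψ (ε⁻¹ * u) * ε⁻¹)) u from h4).deriv
    rw [h5]; ring
  have hconv : lamEps a ψ ε = g ⋆[ContinuousLinearMap.mul ℝ ℝ, volume] φ := by
    funext s
    rw [lamEps, convolution_def]
    simp only [ContinuousLinearMap.mul_apply', hφ_def]
    exact (cov_aux' g ψ hε s).symm
  have hc := HasCompactSupport.hasDerivAt_convolution_right
    (ContinuousLinearMap.mul ℝ ℝ) hg_loc hφc hφ_smooth t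
  rw [← hconv] at hc
  refine hc.congr_deriv (Eq.symm ?_)
  rw [convolution_def]
  simp only [ContinuousLinearMap.mul_apply']
  simp_rw [hφd]
  rw [← cov_aux' g (deriv ψ) hε t]
  simp_rw [show ∀ p q : ℝ, p * (ε⁻¹ * q) = ε⁻¹ * (p * q) from fun p q => mul_left_comm p ε⁻¹ q,
    integral_const_mul]

/-- The integral of the derivative of a compactly supported smooth function vanishes. -/
theorem integral_deriv_zero' (T : ℝ) (ψ : ℝ → ℝ) (hψ_smooth : ContDiff ℝ (⊤ : ℕ∞) ψ)
    (hψ_supp : tsupport ψ ⊆ Icc (0:ℝ) T) : ∫ x, deriv ψ x = 0 := by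
  have hψc : HasCompactSupport ψ :=
    IsCompact.of_isClosed_subset isCompact_Icc (isClosed_tsupport ψ) hψ_supp
  have hψ1 : ContDiff ℝ 1 ψ := hψ_smooth.of_le (by exact_mod_cast le_top)
  have hψ'int : Integrable (deriv ψ) :=
    (hψ1.continuous_deriv le_rfl).integrable_of_hasCompactSupport hψc.deriv
  have h1 := HasCompactSupport.integral_Iic_deriv_eq hψ1 hψc 0
  have h2 := HasCompactSupport.integral_Ioi_deriv_eq hψ1 hψc 0
  have h3 := intervalIntegral.integral_Iic_add_Ioi (b := (0:ℝ))
    hψ'int.integrableOn hψ'int.integrableOn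
  rw [← h3, h1, h2]
  ring

/-- The key 2×2 matrix computation. -/
theorem matrix_key' (l l' : ℝ) (hl : 0 < l) :
    (!![1, 1; -l, l] : Matrix (Fin 2) (Fin 2) ℝ)⁻¹ * !![0, 0; -l', l']
      = ((2 * l)⁻¹ * l') • !![1, -1; -1, 1] := by
  have hinv : (!![1, 1; -l, l] : Matrix (Fin 2) (Fin 2) ℝ)⁻¹
      = (2 * l)⁻¹ • !![l, -1; l, 1] := by
    apply Matrix.inv_eq_right_inv
    rw [Matrix.mul_smul, Matrix.mul_fin_two]
    ext i j
    fin_cases i <;> fin_cases j <;>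
      simp [Matrix.one_apply] <;> field_simp <;> ring
  rw [hinv, Matrix.smul_mul, Matrix.mul_fin_two]
  ext i j
  fin_cases i <;> fin_cases j <;> simp [Matrix.smul_apply] <;> ring

/-- The lower bound `√a₀ ≤ λ^ε(t)`. -/
theorem lam_lower' (T a₀ : ℝ) (ha₀ : 0 < a₀)
    (a : ℝ → ℝ) (ha_cont : Continuous a) (ha_low : ∀ t, a₀ ≤ a t)
    (ψ : ℝ → ℝ) (hψ_smooth : ContDiff ℝ (⊤ : ℕ∞) ψ)
    (hψ_nonneg : ∀ x, 0 ≤ ψ x) (hψ_supp : tsupport ψ ⊆ Icc (0:ℝ) T)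
    (hψ_int : ∫ x, ψ x = 1) {ε : ℝ} (hε : 0 < ε) (t : ℝ) :
    Real.sqrt a₀ ≤ lamEps a ψ ε t := by
  have hψc : HasCompactSupport ψ :=
    IsCompact.of_isClosed_subset isCompact_Icc (isClosed_tsupport ψ) hψ_supp
  have hψ_integ : Integrable ψ := hψ_smooth.continuous.integrable_of_hasCompactSupport hψc
  have hcont : Continuous fun x => Real.sqrt (a (t - ε * x)) * ψ x :=
    ((Real.continuous_sqrt.comp ha_cont).comp
      (continuous_const.sub (continuous_const.mul continuous_id))).mul hψ_smooth.continuous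
  have hcs : HasCompactSupport fun x => Real.sqrt (a (t - ε * x)) * ψ x := hψc.mul_left
  have hint : Integrable fun x => Real.sqrt (a (t - ε * x)) * ψ x :=
    hcont.integrable_of_hasCompactSupport hcs
  rw [lamEps]
  calc Real.sqrt a₀ = ∫ x, Real.sqrt a₀ * ψ x := by rw [integral_const_mul, hψ_int, mul_one]
    _ ≤ ∫ x, Real.sqrt (a (t - ε * x)) * ψ x := by
        apply integral_mono (hψ_integ.const_mul _) hint
        intro x
        exact mul_le_mul_of_nonneg_right (Real.sqrt_le_sqrt (ha_low _)) (hψ_nonneg x)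

/-- The derivative bound `|(λ^ε)'(t)| ≤ C₁ ε^(α-1)`. -/
theorem lam_deriv_bound' (T α a₀ M : ℝ) (hT : 0 < T) (hα0 : 0 < α) (ha₀ : 0 < a₀)
    (hM : 0 ≤ M)
    (a : ℝ → ℝ) (ha_cont : Continuous a) (ha_low : ∀ t, a₀ ≤ a t)
    (hHol : ∀ t s : ℝ, |a t - a s| ≤ M * |t - s| ^ α)
    (ψ : ℝ → ℝ) (hψ_smooth : ContDiff ℝ (⊤ : ℕ∞) ψ)
    (hψ_supp : tsupport ψ ⊆ Icc (0:ℝ) T)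
    {ε : ℝ} (hε : 0 < ε) (t : ℝ) :
    |deriv (lamEps a ψ ε) t|
      ≤ M * T ^ α * (∫ x, |deriv ψ x|) / (2 * Real.sqrt a₀) * ε ^ (α - 1) := by
  have hψc : HasCompactSupport ψ :=
    IsCompact.of_isClosed_subset isCompact_Icc (isClosed_tsupport ψ) hψ_supp
  have hψ1 : ContDiff ℝ 1 ψ := hψ_smooth.of_le (by exact_mod_cast le_top)
  have hψ'cont : Continuous (deriv ψ) := hψ1.continuous_deriv le_rfl
  have hψ'int : Integrable (deriv ψ) :=
    hψ'cont.integrable_of_hasCompactSupport hψc.deriv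
  have hs : 0 < Real.sqrt a₀ := Real.sqrt_pos.2 ha₀
  have hder := (lam_hasDerivAt' T a ha_cont ψ hψ_smooth hψ_supp hε t).deriv
  rw [hder]
  have h0 : ∫ x, Real.sqrt (a t) * deriv ψ x = 0 := by
    rw [integral_const_mul, integral_deriv_zero' T ψ hψ_smooth hψ_supp, mul_zero]
  have hint1 : Integrable fun x => Real.sqrt (a (t - ε * x)) * deriv ψ x := by
    apply Continuous.integrable_of_hasCompactSupport
    · exact ((Real.continuous_sqrt.comp ha_cont).comp
        (continuous_const.sub (continuous_const.mul continuous_id))).mul hψ'cont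
    · exact hψc.deriv.mul_left
  have hint2 : Integrable fun x => Real.sqrt (a t) * deriv ψ x := hψ'int.const_mul _
  have hint3 : Integrable fun x =>
      (Real.sqrt (a (t - ε * x)) - Real.sqrt (a t)) * deriv ψ x := by
    simpa [Pi.sub_def, sub_mul] using hint1.sub hint2
  have hsplit : ∫ x, Real.sqrt (a (t - ε * x)) * deriv ψ x
      = ∫ x, (Real.sqrt (a (t - ε * x)) - Real.sqrt (a t)) * deriv ψ x := by
    rw [← sub_zero (∫ x, Real.sqrt (a (t - ε * x)) * deriv ψ x), ← h0,
      ← integral_sub hint1 hint2]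
    congr 1; funext x; ring
  set K : ℝ := M * ε ^ α * T ^ α / (2 * Real.sqrt a₀) with hK_def
  have hKnn : 0 ≤ K := by
    apply div_nonneg _ (by positivity)
    have : (0:ℝ) ≤ ε ^ α := Real.rpow_nonneg hε.le α
    have : (0:ℝ) ≤ T ^ α := Real.rpow_nonneg hT.le α
    positivity
  have hpt : ∀ x, |(Real.sqrt (a (t - ε * x)) - Real.sqrt (a t)) * deriv ψ x|
      ≤ K * |deriv ψ x| := by
    intro x
    rw [abs_mul]
    by_cases hx : deriv ψ x = 0
    · simp [hx]
    · have hxm : x ∈ Icc (0:ℝ) T := hψ_supp (support_deriv_subset hx)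
      have h1 : |Real.sqrt (a (t - ε * x)) - Real.sqrt (a t)|
          ≤ |a (t - ε * x) - a t| / (2 * Real.sqrt a₀) :=
        sqrt_diff_le' ha₀ (ha_low _) (ha_low _)
      have h2 : |a (t - ε * x) - a t| ≤ M * |ε * x| ^ α := by
        have := hHol (t - ε * x) t
        simpa [abs_neg] using this
      have h3 : |ε * x| ^ α = ε ^ α * x ^ α := by
        rw [abs_mul, abs_of_pos hε, abs_of_nonneg hxm.1, Real.mul_rpow hε.le hxm.1]
      have h4 : x ^ α ≤ T ^ α := Real.rpow_le_rpow hxm.1 hxm.2 hα0.le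
      have hK : |Real.sqrt (a (t - ε * x)) - Real.sqrt (a t)| ≤ K := by
        apply h1.trans
        rw [hK_def, div_le_div_iff_of_pos_right (by positivity)]
        calc |a (t - ε * x) - a t| ≤ M * |ε * x| ^ α := h2
          _ = M * ε ^ α * x ^ α := by rw [h3]; ring
          _ ≤ M * ε ^ α * T ^ α := by
              apply mul_le_mul_of_nonneg_left h4
              have : (0:ℝ) ≤ ε ^ α := Real.rpow_nonneg hε.le α
              positivity
      exact mul_le_mul_of_nonneg_right hK (abs_nonneg _)
  have hbound : |∫ x, (Real.sqrt (a (t - ε * x)) - Real.sqrt (a t)) * deriv ψ x|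
      ≤ K * ∫ x, |deriv ψ x| := by
    calc |∫ x, (Real.sqrt (a (t - ε * x)) - Real.sqrt (a t)) * deriv ψ x|
        ≤ ∫ x, |(Real.sqrt (a (t - ε * x)) - Real.sqrt (a t)) * deriv ψ x| := by
          simpa only [Real.norm_eq_abs] using
            norm_integral_le_integral_norm (μ := volume)
              (fun x => (Real.sqrt (a (t - ε * x)) - Real.sqrt (a t)) * deriv ψ x)
      _ ≤ ∫ x, K * |deriv ψ x| := by
          apply integral_mono hint3.abs ((hψ'int.abs).const_mul K) hpt
      _ = K * ∫ x, |deriv ψ x| := integral_const_mul K _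
  have hInn : 0 ≤ ∫ x, |deriv ψ x| := integral_nonneg fun x => abs_nonneg _
  calc |ε⁻¹ * ∫ x, Real.sqrt (a (t - ε * x)) * deriv ψ x|
      = ε⁻¹ * |∫ x, (Real.sqrt (a (t - ε * x)) - Real.sqrt (a t)) * deriv ψ x| := by
        rw [hsplit, abs_mul, abs_of_pos (inv_pos.2 hε)]
    _ ≤ ε⁻¹ * (K * ∫ x, |deriv ψ x|) :=
        mul_le_mul_of_nonneg_left hbound (by positivity)
    _ = M * T ^ α * (∫ x, |deriv ψ x|) / (2 * Real.sqrt a₀) * ε ^ (α - 1) := by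
        rw [Real.rpow_sub hε, Real.rpow_one, hK_def]
        field_simp

/-- `H(t)` is invertible and `‖H(t)⁻¹ (d/dt)H(t)‖ ≤ C ε^(α-1)` in the operator norm on `ℝ²`. -/
theorem Hmat_inv_deriv_bound
    (T α a₀ M : ℝ) (hT : 0 < T) (hα0 : 0 < α) (hα1 : α < 1) (ha₀ : 0 < a₀)
    (a : ℝ → ℝ) (ha_low : ∀ t, a₀ ≤ a t)
    (hHol : ∀ t s : ℝ, |a t - a s| ≤ M * |t - s| ^ α)
    (ψ : ℝ → ℝ) (hψ_smooth : ContDiff ℝ (⊤ : ℕ∞) ψ)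
    (hψ_nonneg : ∀ x, 0 ≤ ψ x) (hψ_supp : tsupport ψ ⊆ Icc (0:ℝ) T)
    (hψ_int : ∫ x, ψ x = 1) :
    (∀ ε ∈ Ioc (0:ℝ) 1, ∀ t ∈ Icc (0:ℝ) T, IsUnit (Hmat a ψ ε t)) ∧
    ∃ C > 0, ∀ ε ∈ Ioc (0:ℝ) 1, ∀ t ∈ Icc (0:ℝ) T,
      ‖Matrix.toEuclideanCLM (𝕜 := ℝ) ((Hmat a ψ ε t)⁻¹ * HmatDeriv a ψ ε t)‖
        ≤ C * ε ^ (α - 1) := by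
  have ha_cont : Continuous a := cont_of_holder' α M hα0 a hHol
  have hM : 0 ≤ M := by
    have h := hHol 1 0
    simp at h
    exact le_trans (abs_nonneg _) h
  have hs : 0 < Real.sqrt a₀ := Real.sqrt_pos.2 ha₀
  have hlow : ∀ ε ∈ Ioc (0:ℝ) 1, ∀ t : ℝ, 0 < lamEps a ψ ε t := by
    intro ε hε t
    exact lt_of_lt_of_le hs
      (lam_lower' T a₀ ha₀ a ha_cont ha_low ψ hψ_smooth hψ_nonneg hψ_supp hψ_int hε.1 t)
  constructor
  · intro ε hε t _
    rw [Hmat, Matrix.isUnit_iff_isUnit_det, Matrix.det_fin_two_of, isUnit_iff_ne_zero]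
    have := hlow ε hε t
    intro h; nlinarith
  · set I : ℝ := ∫ x, |deriv ψ x| with hI_def
    have hInn : 0 ≤ I := integral_nonneg fun x => abs_nonneg _
    set k : ℝ := ‖Matrix.toEuclideanCLM (𝕜 := ℝ)
      (!![1, -1; -1, 1] : Matrix (Fin 2) (Fin 2) ℝ)‖ with hk_def
    have hknn : 0 ≤ k := norm_nonneg _
    set C₁ : ℝ := M * T ^ α * I / (2 * Real.sqrt a₀) with hC₁_def
    have hC₁nn : 0 ≤ C₁ := by
      apply div_nonneg _ (by positivity)
      have : (0:ℝ) ≤ T ^ α := Real.rpow_nonneg hT.le α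
      positivity
    refine ⟨k * C₁ / (2 * Real.sqrt a₀) + 1, by positivity, ?_⟩
    intro ε hε t ht
    set l : ℝ := lamEps a ψ ε t with hl_def
    set l' : ℝ := deriv (lamEps a ψ ε) t with hl'_def
    have hl : 0 < l := hlow ε hε t
    have hl_lb : Real.sqrt a₀ ≤ l :=
      lam_lower' T a₀ ha₀ a ha_cont ha_low ψ hψ_smooth hψ_nonneg hψ_supp hψ_int hε.1 t
    have hl' : |l'| ≤ C₁ * ε ^ (α - 1) :=
      lam_deriv_bound' T α a₀ M hT hα0 ha₀ hM a ha_cont ha_low hHol ψ hψ_smooth hψ_supp hε.1 t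
    have hkey : (Hmat a ψ ε t)⁻¹ * HmatDeriv a ψ ε t
        = ((2 * l)⁻¹ * l') • !![1, -1; -1, 1] := by
      rw [Hmat, HmatDeriv]
      exact matrix_key' l l' hl
    rw [hkey, _root_.map_smul]
    rw [norm_smul ((2 * l)⁻¹ * l') (Matrix.toEuclideanCLM (𝕜 := ℝ)
      (!![1, -1; -1, 1] : Matrix (Fin 2) (Fin 2) ℝ)), Real.norm_eq_abs, ← hk_def]
    have hεpow : 0 < ε ^ (α - 1) := Real.rpow_pos_of_pos hε.1 _
    have habs : |(2 * l)⁻¹ * l'| ≤ C₁ * ε ^ (α - 1) / (2 * Real.sqrt a₀) := by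
      rw [abs_mul, abs_of_pos (inv_pos.2 (by linarith : (0:ℝ) < 2 * l)), div_eq_inv_mul]
      apply mul_le_mul _ hl' (abs_nonneg _) (by positivity)
      exact inv_anti₀ (by positivity) (by linarith)
    calc |(2 * l)⁻¹ * l'| * k ≤ C₁ * ε ^ (α - 1) / (2 * Real.sqrt a₀) * k := by
          apply mul_le_mul_of_nonneg_right habs hknn
      _ = k * C₁ / (2 * Real.sqrt a₀) * ε ^ (α - 1) := by ring
      _ ≤ (k * C₁ / (2 * Real.sqrt a₀) + 1) * ε ^ (α - 1) := by nlinarith [hεpow]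
end

section
/- Let T>0, 0<α<1, a₀>0. Assume a:ℝ→ℝ is Hölder continuous of order α, bounded, with a(t) ≥ a₀ for all t, and q:[0,T]→ℝ is essentially bounded. Let s ≥ 1 satisfy s < 1 + α/(1−α), and let c₀, A > 0. Then there exist constants C, K > 0, depending only on T, α, a₀, ‖a‖_{C^α}, ‖q‖_{L^∞}, s, c₀ and A (and independent of λ), such that for every λ ≥ 0, every continuous f:[0,T]→ℂ with |f(t)| ≤ c₀ e^{−A(1+λ)^{1/(2s)}} for all t, and every twice continuously differentiable v:[0,T]→ℂ satisfying v''(t) + λ a(t) v(t) + q(t) v(t) = f(t) on [0,T], one has (1+λ)|v(t)|² + |v'(t)|² ≤ C e^{K(1+λ)^{1/(2s)}} ( (1+λ)|v(0)|² + |v'(0)|² + 1 ) for all t ∈ [0,T]. -/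
open Set MeasureTheory

lemma normSq_hasDerivAt' {w : ℝ → ℂ} {w' : ℂ} {t : ℝ} (h : HasDerivAt w w' t) :
    HasDerivAt (fun t => ‖w t‖ ^ 2) (2 * ((starRingEnd ℂ) (w t) * w').re) t := by
  have hre : HasDerivAt (fun t => (w t).re) w'.re t :=
    Complex.reCLM.hasFDerivAt.comp_hasDerivAt t h
  have him : HasDerivAt (fun t => (w t).im) w'.im t :=
    Complex.imCLM.hasFDerivAt.comp_hasDerivAt t h
  have h2 := (hre.mul hre).add (him.mul him)
  have heq : (fun t => ‖w t‖ ^ 2)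
      = fun t => (w t).re * (w t).re + (w t).im * (w t).im := by
    funext x
    rw [Complex.sq_norm, Complex.normSq_apply]
  rw [heq]
  refine h2.congr_deriv ?_
  simp [Complex.mul_re, Complex.conj_re, Complex.conj_im]
  ring

lemma aux_two_mul_le (lam x y : ℝ) (hlam : 0 ≤ lam) :
    2 * lam * (x * y) ≤ Real.sqrt (1 + lam) * (lam * x ^ 2 + y ^ 2) := by
  set s := Real.sqrt (1 + lam) with hs
  have hu : Real.sqrt lam ^ 2 = lam := Real.sq_sqrt hlam
  have hu0 : 0 ≤ Real.sqrt lam := Real.sqrt_nonneg lam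
  have hus : Real.sqrt lam ≤ s := by
    rw [hs]; exact Real.sqrt_le_sqrt (by linarith)
  rw [← hu]
  nlinarith [mul_nonneg hu0 (sq_nonneg (Real.sqrt lam * x - y)),
    mul_nonneg (sub_nonneg.2 hus)
      (by positivity : (0:ℝ) ≤ Real.sqrt lam ^ 2 * x ^ 2 + y ^ 2)]

set_option maxHeartbeats 1000000 in
/-- Case 2 Fourier-mode energy estimate: Hölder continuous speed bounded away from zero,
yielding Gevrey-order-`s` well-posedness for `1 ≤ s < 1 + α/(1-α)`. -/
theorem gevrey_energy_estimate_holder_nondegenerate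
    (T α a₀ M Ma Mq s c₀ A : ℝ) (hT : 0 < T) (hα0 : 0 < α) (hα1 : α < 1) (ha₀ : 0 < a₀)
    (a q : ℝ → ℝ)
    (hHol : ∀ t u : ℝ, |a t - a u| ≤ M * |t - u| ^ α)
    (ha_bd : ∀ t, |a t| ≤ Ma)
    (ha_low : ∀ t, a₀ ≤ a t)
    (hq_bd : ∀ t ∈ Icc (0:ℝ) T, |q t| ≤ Mq)
    (hs1 : 1 ≤ s) (hs2 : s < 1 + α / (1 - α))
    (hc₀ : 0 < c₀) (hA : 0 < A) :
    ∃ C > 0, ∃ K > 0, ∀ lam : ℝ, 0 ≤ lam → ∀ f v v' v'' : ℝ → ℂ,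
      ContinuousOn f (Icc (0:ℝ) T) →
      (∀ t ∈ Icc (0:ℝ) T, ‖f t‖ ≤ c₀ * Real.exp (-A * (1 + lam) ^ (1 / (2 * s)))) →
      (∀ t ∈ Icc (0:ℝ) T, HasDerivAt v (v' t) t) →
      (∀ t ∈ Icc (0:ℝ) T, HasDerivAt v' (v'' t) t) →
      ContinuousOn v'' (Icc (0:ℝ) T) →
      (∀ t ∈ Icc (0:ℝ) T, v'' t + (lam : ℂ) * (a t : ℂ) * v t + (q t : ℂ) * v t = f t) →
      ∀ t ∈ Icc (0:ℝ) T,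
        (1 + lam) * ‖v t‖ ^ 2 + ‖v' t‖ ^ 2 ≤
          C * Real.exp (K * (1 + lam) ^ (1 / (2 * s))) *
            ((1 + lam) * ‖v 0‖ ^ 2 + ‖v' 0‖ ^ 2 + 1) := by
  -- basic facts on the constants
  have hM0 : 0 ≤ M := by
    have h := hHol 0 1
    simp at h
    exact (abs_nonneg _).trans h
  have hMq0 : 0 ≤ Mq := (abs_nonneg _).trans (hq_bd 0 ⟨le_refl _, hT.le⟩)
  have hMa : a₀ ≤ Ma := (ha_low 0).trans ((le_abs_self _).trans (ha_bd 0))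
  have h1α : 0 < 1 - α := by linarith
  have hs0 : 0 < s := lt_of_lt_of_le one_pos hs1
  have hexp : (1 - α) / 2 ≤ 1 / (2 * s) := by
    have h2 : s * (1 - α) < (1 + α / (1 - α)) * (1 - α) :=
      mul_lt_mul_of_pos_right hs2 h1α
    have h3 : (1 + α / (1 - α)) * (1 - α) = 1 := by field_simp; ring
    have h1 : s * (1 - α) < 1 := by linarith
    rw [div_le_div_iff₀ (by norm_num) (by positivity)]
    nlinarith
  -- continuity of a
  have ha_cont : Continuous a := by
    rw [continuous_iff_continuousAt]
    intro t
    have hbound : ∀ x : ℝ, ‖a x - a t‖ ≤ M * |x - t| ^ α := fun x => hHol x t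
    have hg : Filter.Tendsto (fun x : ℝ => M * |x - t| ^ α) (nhds t) (nhds 0) := by
      have h1 : Filter.Tendsto (fun x : ℝ => |x - t|) (nhds t) (nhds 0) := by
        have hc : Continuous fun x : ℝ => |x - t| :=
          (continuous_id.sub continuous_const).abs
        simpa using hc.tendsto t
      have h2 : Filter.Tendsto (fun y : ℝ => M * y ^ α) (nhds 0) (nhds 0) := by
        have h3 : ContinuousAt (fun y : ℝ => y ^ α) 0 :=
          Real.continuousAt_rpow_const 0 α (Or.inr hα0.le)
        have h4 := h3.tendsto
        rw [Real.zero_rpow hα0.ne'] at h4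
        simpa using (h4.const_mul M)
      exact h2.comp h1
    have h5 : Filter.Tendsto (fun x => a x - a t) (nhds t) (nhds 0) :=
      squeeze_zero_norm hbound hg
    have h6 := h5.add_const (a t)
    simp only [sub_add_cancel, zero_add] at h6
    exact h6
  have hInt : ∀ x y : ℝ, IntervalIntegrable a volume x y := fun x y =>
    ha_cont.intervalIntegrable x y
  set m := min a₀ 1 with hm
  have hm0 : 0 < m := lt_min ha₀ one_pos
  have hm1 : m ≤ 1 := min_le_right _ _
  have hma : m ≤ a₀ := min_le_left _ _
  set Mb := max Ma 1 with hMb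
  have hMb1 : 1 ≤ Mb := le_max_right _ _
  have hMbMa : Ma ≤ Mb := le_max_left _ _
  set Q := 2 * M / m + 2 + Mq + c₀ ^ 2 with hQ
  have hQ0 : 0 < Q := by
    have h1 : 0 ≤ 2 * M / m := div_nonneg (by linarith) hm0.le
    have := sq_nonneg c₀
    rw [hQ]; linarith
  clear_value m Mb Q
  refine ⟨Mb / m, div_pos (lt_of_lt_of_le one_pos hMb1) hm0, Q * T, mul_pos hQ0 hT, ?_⟩
  intro lam hlam f v v' v'' hfc hfb hv hv' hv''c hode
  have h1lam : (0:ℝ) < 1 + lam := by linarith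
  set ε := (1 + lam) ^ (-(1/2) : ℝ) with hε
  have hε0 : 0 < ε := Real.rpow_pos_of_pos h1lam _
  set D := (1 + lam) ^ ((1 - α) / 2 : ℝ) with hD
  set D' := (1 + lam) ^ (1 / (2 * s)) with hD'
  have hDD' : D ≤ D' := Real.rpow_le_rpow_of_exponent_le (by linarith) hexp
  have hD'1 : (1:ℝ) ≤ D' := by
    rw [hD']
    calc (1:ℝ) = (1 + lam) ^ (0:ℝ) := (Real.rpow_zero _).symm
      _ ≤ (1 + lam) ^ (1 / (2 * s)) :=
          Real.rpow_le_rpow_of_exponent_le (by linarith) (by positivity)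
  have hD0 : 0 ≤ D := (Real.rpow_pos_of_pos h1lam _).le
  have hεα : ε ^ α = (1 + lam) ^ (-(1/2) * α : ℝ) := by
    rw [hε]; exact (Real.rpow_mul h1lam.le _ _).symm
  have hDeq1 : ε ^ α / ε = D := by
    rw [hεα, hε, ← Real.rpow_sub h1lam, hD]
    congr 1; ring
  have hDeq2 : Real.sqrt (1 + lam) * ε ^ α = D := by
    rw [Real.sqrt_eq_rpow, hεα, ← Real.rpow_add h1lam, hD]
    congr 1; ring
  -- the smoothed coefficient
  set b : ℝ → ℝ := fun t => ((∫ u in (0:ℝ)..(t + ε), a u) - ∫ u in (0:ℝ)..t, a u) / ε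
    with hbdef
  have hb_int : ∀ t : ℝ, b t = (∫ u in t..(t + ε), a u) / ε := by
    intro t
    rw [hbdef]
    have h := intervalIntegral.integral_add_adjacent_intervals (μ := volume)
      (hInt 0 t) (hInt t (t + ε))
    simp only
    rw [show (∫ u in (0:ℝ)..(t + ε), a u) - ∫ u in (0:ℝ)..t, a u
        = ∫ u in t..(t + ε), a u by linarith]
  have hF : ∀ x : ℝ, HasDerivAt (fun y => ∫ u in (0:ℝ)..y, a u) (a x) x := fun x =>
    intervalIntegral.integral_hasDerivAt_right (hInt 0 x)
      (ha_cont.stronglyMeasurableAtFilter _ _) ha_cont.continuousAt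
  have hb_deriv : ∀ t : ℝ, HasDerivAt b ((a (t + ε) - a t) / ε) t := by
    intro t
    have h1 : HasDerivAt (fun y : ℝ => ∫ u in (0:ℝ)..(y + ε), a u) (a (t + ε)) t := by
      have h2 := (hF (t + ε)).comp t ((hasDerivAt_id t).add_const ε)
      simpa [Function.comp_def] using h2
    exact (h1.sub (hF t)).div_const ε
  have hb_sub : ∀ t : ℝ, |b t - a t| ≤ M * ε ^ α := by
    intro t
    have key : ∀ x ∈ Set.uIoc t (t + ε), ‖a x - a t‖ ≤ M * ε ^ α := by
      intro x hx
      rw [Set.uIoc_of_le (by linarith : t ≤ t + ε)] at hx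
      have hx1 : |x - t| ≤ ε := by
        rw [abs_of_nonneg (by linarith [hx.1] : (0:ℝ) ≤ x - t)]
        linarith [hx.2]
      calc ‖a x - a t‖ ≤ M * |x - t| ^ α := hHol x t
        _ ≤ M * ε ^ α := by
            apply mul_le_mul_of_nonneg_left _ hM0
            exact Real.rpow_le_rpow (abs_nonneg _) hx1 hα0.le
    have h2 := intervalIntegral.norm_integral_le_of_norm_le_const key
    have h3 : (∫ x in t..(t + ε), (a x - a t)) = (∫ u in t..(t + ε), a u) - ε * a t := by
      rw [intervalIntegral.integral_sub (hInt t (t + ε)) intervalIntegrable_const,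
        intervalIntegral.integral_const]
      simp
    have h4 : b t - a t = (∫ x in t..(t + ε), (a x - a t)) / ε := by
      rw [h3, hb_int t]; field_simp
    rw [h4, Real.norm_eq_abs] at *
    rw [abs_div, abs_of_pos hε0, div_le_iff₀ hε0]
    calc |∫ x in t..(t + ε), (a x - a t)| ≤ M * ε ^ α * |t + ε - t| := h2
      _ = M * ε ^ α * ε := by rw [show t + ε - t = ε by ring, abs_of_pos hε0]
  have hb_low : ∀ t : ℝ, a₀ ≤ b t := by
    intro t
    rw [hb_int t, le_div_iff₀ hε0]
    have h1 : a₀ * ε = ∫ _ in t..(t + ε), a₀ := by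
      rw [intervalIntegral.integral_const]; simp; ring
    rw [h1]
    exact intervalIntegral.integral_mono_on (by linarith) intervalIntegrable_const
      (hInt t (t + ε)) (fun x _ => ha_low x)
  have hb_up : ∀ t : ℝ, b t ≤ Ma := by
    intro t
    rw [hb_int t, div_le_iff₀ hε0]
    have h1 : Ma * ε = ∫ _ in t..(t + ε), Ma := by
      rw [intervalIntegral.integral_const]; simp; ring
    rw [h1]
    exact intervalIntegral.integral_mono_on (by linarith) (hInt t (t + ε))
      intervalIntegrable_const (fun x _ => (le_abs_self _).trans (ha_bd x))
  have hb_nonneg : ∀ t : ℝ, 0 ≤ b t := fun t => ha₀.le.trans (hb_low t)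
  clear_value b ε D D'
  -- energy and its derivative
  set E : ℝ → ℝ := fun τ => (lam * b τ + 1) * ‖v τ‖ ^ 2 + ‖v' τ‖ ^ 2 + 1 with hEdef
  set Ed : ℝ → ℝ := fun τ =>
    lam * ((a (τ + ε) - a τ) / ε) * ‖v τ‖ ^ 2
      + (lam * b τ + 1) * (2 * ((starRingEnd ℂ) (v τ) * v' τ).re)
      + 2 * ((starRingEnd ℂ) (v' τ) * v'' τ).re with hEddef
  clear_value E Ed
  have hEder : ∀ t ∈ Icc (0:ℝ) T, HasDerivAt E (Ed t) t := by
    intro t ht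
    rw [hEdef, hEddef]
    have h1 : HasDerivAt (fun τ => lam * b τ + 1) (lam * ((a (t + ε) - a t) / ε)) t :=
      ((hb_deriv t).const_mul lam).add_const 1
    have h2 := h1.mul (normSq_hasDerivAt' (hv t ht))
    exact (h2.add (normSq_hasDerivAt' (hv' t ht))).add_const 1
  have hE_ge1 : ∀ τ : ℝ, 1 ≤ E τ := by
    intro τ
    rw [hEdef]
    have h1 : 0 ≤ (lam * b τ + 1) * ‖v τ‖ ^ 2 := by
      apply mul_nonneg _ (sq_nonneg _)
      have := mul_nonneg hlam (hb_nonneg τ); linarith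
    have := sq_nonneg ‖v' τ‖
    simp only
    linarith
  -- pointwise differential inequality
  have hEd_le : ∀ t ∈ Icc (0:ℝ) T, Ed t ≤ Q * D' * E t := by
    intro t ht
    set x := ‖v t‖ with hx
    set y := ‖v' t‖ with hy
    set r := ((starRingEnd ℂ) (v t) * v' t).re with hr
    clear_value x y r
    have hx0 : 0 ≤ x := hx ▸ norm_nonneg _
    have hy0 : 0 ≤ y := hy ▸ norm_nonneg _
    have hr_abs : |r| ≤ x * y := by
      rw [hr, hx, hy]
      calc |((starRingEnd ℂ) (v t) * v' t).re| ≤ ‖(starRingEnd ℂ) (v t) * v' t‖ :=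
            Complex.abs_re_le_norm _
        _ = ‖v t‖ * ‖v' t‖ := by
            rw [norm_mul, RCLike.norm_conj]
    -- rewrite the second derivative using the ODE
    have hSt : ((starRingEnd ℂ) (v' t) * v'' t).re
        = ((starRingEnd ℂ) (v' t) * f t).re - (lam * a t + q t) * r := by
      have hveq : v'' t = f t - (lam : ℂ) * (a t : ℂ) * v t - (q t : ℂ) * v t := by
        linear_combination hode t ht
      rw [hr, hveq]
      simp [Complex.mul_re, Complex.mul_im, Complex.sub_re, Complex.sub_im,
        Complex.conj_re, Complex.conj_im, Complex.ofReal_re, Complex.ofReal_im]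
      ring
    -- pieces
    have hX : |(a (t + ε) - a t) / ε| ≤ M * D := by
      rw [abs_div, abs_of_pos hε0, div_le_iff₀ hε0]
      have h1 : |a (t + ε) - a t| ≤ M * ε ^ α := by
        have := hHol (t + ε) t
        rwa [show t + ε - t = ε by ring, abs_of_pos hε0] at this
      calc |a (t + ε) - a t| ≤ M * ε ^ α := h1
        _ = M * (ε ^ α / ε) * ε := by field_simp
        _ = M * D * ε := by rw [hDeq1]
    have hT1 : lam * ((a (t + ε) - a t) / ε) * x ^ 2 ≤ M * D * (lam * x ^ 2) := by
      have h1 := (abs_le.mp hX).2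
      nlinarith only [mul_nonneg (sub_nonneg.2 h1) (mul_nonneg hlam (sq_nonneg x))]
    have hprod : (b t - a t) * r ≤ M * ε ^ α * (x * y) := by
      nlinarith only [(abs_le.mp (hb_sub t)).1, (abs_le.mp (hb_sub t)).2,
        (abs_le.mp hr_abs).1, (abs_le.mp hr_abs).2]
    have hT2 : 2 * (lam * (b t - a t)) * r ≤ M * D * (lam * x ^ 2 + y ^ 2) := by
      have h1 : 2 * (lam * (b t - a t)) * r ≤ 2 * lam * (M * ε ^ α * (x * y)) := by
        nlinarith only [mul_le_mul_of_nonneg_left hprod hlam]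
      have h2 : 2 * lam * (M * ε ^ α * (x * y)) = M * ε ^ α * (2 * lam * (x * y)) := by ring
      have h3 := aux_two_mul_le lam x y hlam
      have h4 : M * ε ^ α * (2 * lam * (x * y))
          ≤ M * ε ^ α * (Real.sqrt (1 + lam) * (lam * x ^ 2 + y ^ 2)) := by
        apply mul_le_mul_of_nonneg_left h3 (by positivity)
      have h5 : M * ε ^ α * (Real.sqrt (1 + lam) * (lam * x ^ 2 + y ^ 2))
          = M * (Real.sqrt (1 + lam) * ε ^ α) * (lam * x ^ 2 + y ^ 2) := by ring
      rw [h2] at h1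
      rw [h5, hDeq2] at h4
      linarith
    have hT3 : 2 * (1 - q t) * r ≤ (1 + Mq) * (x ^ 2 + y ^ 2) := by
      have hq1 := (abs_le.mp (hq_bd t ht)).1
      have hq2 := (abs_le.mp (hq_bd t ht)).2
      have hr1 := (abs_le.mp hr_abs).1
      have hr2 := (abs_le.mp hr_abs).2
      nlinarith only [hq1, hq2, hr1, hr2, hMq0, sq_nonneg (x - y), sq_nonneg (x + y)]
    have hφ : ((starRingEnd ℂ) (v' t) * f t).re ≤ y * c₀ := by
      have h1 : ((starRingEnd ℂ) (v' t) * f t).re ≤ ‖(starRingEnd ℂ) (v' t) * f t‖ := by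
        exact (le_abs_self _).trans (Complex.abs_re_le_norm _)
      have h2 : ‖(starRingEnd ℂ) (v' t) * f t‖ = y * ‖f t‖ := by
        rw [hy, norm_mul, RCLike.norm_conj]
      have h3 : ‖f t‖ ≤ c₀ := by
        have h4 := hfb t ht
        have h5 : Real.exp (-A * D') ≤ 1 := by
          rw [Real.exp_le_one_iff]
          nlinarith only [hA, hD'1]
        nlinarith only [h4, h5, hc₀, Real.exp_pos (-A * D'),
          mul_le_mul_of_nonneg_left h5 hc₀.le]
      rw [h2] at h1
      exact h1.trans (mul_le_mul_of_nonneg_left h3 hy0)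
    have hT4 : 2 * ((starRingEnd ℂ) (v' t) * f t).re ≤ y ^ 2 + c₀ ^ 2 := by
      nlinarith only [hφ, sq_nonneg (y - c₀)]
    -- energy lower bounds
    have hEt1 := hE_ge1 t
    have hEt : E t = (lam * b t + 1) * x ^ 2 + y ^ 2 + 1 := by
      rw [hEdef, hx, hy]
    have hEm : m * (lam * x ^ 2 + y ^ 2) ≤ E t := by
      rw [hEt]
      nlinarith only [mul_nonneg (sub_nonneg.2 (hma.trans (hb_low t)))
          (mul_nonneg hlam (sq_nonneg x)), sq_nonneg x, sq_nonneg y, hm1, hm0.le,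
        mul_nonneg hlam (sq_nonneg x)]
    have hE0' : 0 ≤ E t := by linarith
    have hxyE : x ^ 2 + y ^ 2 ≤ E t := by
      rw [hEt]
      nlinarith only [mul_nonneg (mul_nonneg hlam (hb_nonneg t)) (sq_nonneg x)]
    -- combine
    have hEdt : Ed t = lam * ((a (t + ε) - a t) / ε) * x ^ 2
        + 2 * (lam * (b t - a t)) * r + 2 * (1 - q t) * r
        + 2 * ((starRingEnd ℂ) (v' t) * f t).re := by
      rw [hEddef]
      simp only
      rw [hSt, hx, hr]
      ring
    have hMD' : M * D * (lam * x ^ 2 + y ^ 2) ≤ M / m * D' * E t := by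
      have h1 : M * D ≤ M * D' := mul_le_mul_of_nonneg_left hDD' hM0
      have h2 : lam * x ^ 2 + y ^ 2 ≤ E t / m := by
        rw [le_div_iff₀ hm0]; nlinarith only [hEm]
      calc M * D * (lam * x ^ 2 + y ^ 2) ≤ M * D' * (lam * x ^ 2 + y ^ 2) := by
            apply mul_le_mul_of_nonneg_right h1
            nlinarith only [mul_nonneg hlam (sq_nonneg x), sq_nonneg y]
        _ ≤ M * D' * (E t / m) := by
            apply mul_le_mul_of_nonneg_left h2
            exact mul_nonneg hM0 (by linarith)
        _ = M / m * D' * E t := by field_simp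
    have hMD'' : M * D * (lam * x ^ 2) ≤ M / m * D' * E t := by
      refine le_trans ?_ hMD'
      apply mul_le_mul_of_nonneg_left _ (mul_nonneg hM0 hD0)
      nlinarith only [sq_nonneg y]
    have hrest : (1 + Mq) * (x ^ 2 + y ^ 2) + (y ^ 2 + c₀ ^ 2)
        ≤ (2 + Mq + c₀ ^ 2) * D' * E t := by
      have h1 : (1 + Mq) * (x ^ 2 + y ^ 2) ≤ (1 + Mq) * E t :=
        mul_le_mul_of_nonneg_left hxyE (by linarith)
      have h2 : y ^ 2 + c₀ ^ 2 ≤ (1 + c₀ ^ 2) * E t := by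
        nlinarith only [sq_nonneg c₀, hxyE, hEt1, sq_nonneg x,
          mul_nonneg (sq_nonneg c₀) (by linarith : (0:ℝ) ≤ E t - 1)]
      have h3 : (2 + Mq + c₀ ^ 2) * E t ≤ (2 + Mq + c₀ ^ 2) * D' * E t := by
        nlinarith only [mul_nonneg (mul_nonneg (by linarith [sq_nonneg c₀] : (0:ℝ) ≤ 2 + Mq + c₀ ^ 2)
          (by linarith : (0:ℝ) ≤ D' - 1)) hE0']
      linarith
    have hQsplit : Q * D' * E t = M / m * D' * E t + M / m * D' * E t
        + (2 + Mq + c₀ ^ 2) * D' * E t := by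
      rw [hQ]; ring
    rw [hEdt, hQsplit]
    linarith
  -- Gronwall
  have hΦ0 : 0 ≤ Q * D' := mul_nonneg hQ0.le (by linarith)
  have hg : ∀ τ ∈ Icc (0:ℝ) T, HasDerivAt (fun τ => E τ * Real.exp (-(Q * D') * τ))
      ((Ed τ - Q * D' * E τ) * Real.exp (-(Q * D') * τ)) τ := by
    intro τ hτ
    have h1 : HasDerivAt (fun τ : ℝ => -(Q * D') * τ) (-(Q * D')) τ := by
      simpa using (hasDerivAt_id τ).const_mul (-(Q * D'))
    have h2 := (hEder τ hτ).mul h1.exp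
    refine h2.congr_deriv ?_
    ring
  have hanti : AntitoneOn (fun τ => E τ * Real.exp (-(Q * D') * τ)) (Icc 0 T) := by
    apply antitoneOn_of_deriv_nonpos (convex_Icc 0 T)
    · intro τ hτ
      exact (hg τ hτ).continuousAt.continuousWithinAt
    · intro τ hτ
      rw [interior_Icc] at hτ
      exact (hg τ (Ioo_subset_Icc_self hτ)).differentiableAt.differentiableWithinAt
    · intro τ hτ
      rw [interior_Icc] at hτ
      rw [(hg τ (Ioo_subset_Icc_self hτ)).deriv]
      have h3 := hEd_le τ (Ioo_subset_Icc_self hτ)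
      exact mul_nonpos_of_nonpos_of_nonneg (by linarith) (Real.exp_pos _).le
  intro t ht
  have hg0 : E t * Real.exp (-(Q * D') * t) ≤ E 0 * Real.exp (-(Q * D') * 0) :=
    hanti (left_mem_Icc.2 hT.le) ht ht.1
  have hEt_le : E t ≤ E 0 * Real.exp (Q * T * D') := by
    rw [show -(Q * D') * (0:ℝ) = 0 by ring, Real.exp_zero, mul_one] at hg0
    have h2 := mul_le_mul_of_nonneg_right hg0 (Real.exp_pos ((Q * D') * t)).le
    rw [mul_assoc, ← Real.exp_add, show -(Q * D') * t + Q * D' * t = 0 by ring,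
      Real.exp_zero, mul_one] at h2
    have h3 : Real.exp (Q * D' * t) ≤ Real.exp (Q * T * D') := by
      apply Real.exp_le_exp.2
      have h4 : Q * D' * t ≤ Q * D' * T := mul_le_mul_of_nonneg_left ht.2 hΦ0
      nlinarith only [h4]
    calc E t ≤ E 0 * Real.exp (Q * D' * t) := h2
      _ ≤ E 0 * Real.exp (Q * T * D') :=
          mul_le_mul_of_nonneg_left h3 (by linarith [hE_ge1 0])
  -- final assembly
  have hE0b : E 0 ≤ Mb * ((1 + lam) * ‖v 0‖ ^ 2 + ‖v' 0‖ ^ 2 + 1) := by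
    have h1 : lam * b 0 + 1 ≤ Mb * (1 + lam) := by
      nlinarith only [mul_nonneg hlam (sub_nonneg.2 (hb_up 0)), hMb1, hlam,
        mul_nonneg hlam (sub_nonneg.2 hMbMa)]
    rw [hEdef]
    simp only
    nlinarith only [mul_le_mul_of_nonneg_right h1 (sq_nonneg ‖v 0‖), hMb1,
      mul_nonneg (sub_nonneg.2 hMb1) (sq_nonneg ‖v' 0‖)]
  have hmElow : m * ((1 + lam) * ‖v t‖ ^ 2 + ‖v' t‖ ^ 2) ≤ E t := by
    have h1 : m * (1 + lam) ≤ lam * b t + 1 := by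
      nlinarith only [mul_nonneg hlam (sub_nonneg.2 (hma.trans (hb_low t))), hm1, hlam]
    rw [hEdef]
    simp only
    nlinarith only [mul_le_mul_of_nonneg_right h1 (sq_nonneg ‖v t‖), hm1, hm0.le,
      mul_nonneg (sub_nonneg.2 hm1) (sq_nonneg ‖v' t‖), sq_nonneg ‖v' t‖]
  rw [show Mb / m * Real.exp (Q * T * D') * ((1 + lam) * ‖v 0‖ ^ 2 + ‖v' 0‖ ^ 2 + 1)
      = Mb * ((1 + lam) * ‖v 0‖ ^ 2 + ‖v' 0‖ ^ 2 + 1) * Real.exp (Q * T * D') / m by ring]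
  rw [le_div_iff₀ hm0]
  have hfin : m * ((1 + lam) * ‖v t‖ ^ 2 + ‖v' t‖ ^ 2) ≤
      Mb * ((1 + lam) * ‖v 0‖ ^ 2 + ‖v' 0‖ ^ 2 + 1) * Real.exp (Q * T * D') :=
    hmElow.trans (hEt_le.trans (mul_le_mul_of_nonneg_right hE0b (Real.exp_pos _).le))
  linarith [hfin]
end

section
/- Let T>0, let a:[0,T]→ℝ satisfy a(t) ≥ 0 for all t, let A(t) = [[0,1],[a(t),0]] and P_ε(t) = [[a(t)+ε², 0],[0,1]] for ε ∈ (0,1]. Then P_ε(t)A(t) − A(t)ᵀP_ε(t) = [[0, ε²],[−ε², 0]], and for every t ∈ [0,T], every ε ∈ (0,1] and every V ∈ ℂ²: |⟨(P_ε(t)A(t) − A(t)ᵀP_ε(t)) V, V⟩| ≤ ε ⟨P_ε(t)V, V⟩. -/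
open Set MeasureTheory Matrix

/-- The quasi-symmetriser `P_ε(t) = [[a(t)+ε², 0],[0,1]]` as a complex matrix. -/
noncomputable def Pmat (a : ℝ → ℝ) (ε t : ℝ) : Matrix (Fin 2) (Fin 2) ℂ :=
  !![((a t + ε ^ 2 : ℝ) : ℂ), 0; 0, 1]

/-- The matrix `A(t) = [[0,1],[a(t),0]]` as a complex matrix. -/
noncomputable def AmatC (a : ℝ → ℝ) (t : ℝ) : Matrix (Fin 2) (Fin 2) ℂ :=
  !![0, 1; ((a t : ℝ) : ℂ), 0]

lemma inner_toEuclideanCLM (M : Matrix (Fin 2) (Fin 2) ℂ) (V : EuclideanSpace ℂ (Fin 2)) :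
    (inner ℂ ((Matrix.toEuclideanCLM (𝕜 := ℂ) M) V) V : ℂ)
    = starRingEnd ℂ (M 0 0 * V 0 + M 0 1 * V 1) * V 0
      + starRingEnd ℂ (M 1 0 * V 0 + M 1 1 * V 1) * V 1 := by
  simp [EuclideanSpace.inner_eq_star_dotProduct, Matrix.mulVec, dotProduct,
    Fin.sum_univ_two, mul_comm]

lemma real_bound (ε c A B L : ℝ) (hε : 0 < ε) (hc : 0 ≤ c) (hL : L ≤ 2 * ε^2 * (A * B)) :
    L ≤ ε * ((c + ε^2) * A^2 + B^2) := by
  nlinarith [mul_nonneg hε.le (sq_nonneg (ε * A - B)),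
    mul_nonneg (mul_nonneg hε.le hc) (sq_nonneg A)]

/-- `P_ε A − Aᵀ P_ε = [[0,ε²],[−ε²,0]]` and the quadratic form of the commutator is
controlled by `ε ⟨P_ε V, V⟩`. -/
theorem quasi_symmetriser_commutator_bound
    (T : ℝ) (hT : 0 < T) (a : ℝ → ℝ)
    (ha_nonneg : ∀ t ∈ Icc (0:ℝ) T, 0 ≤ a t) :
    ∀ t ∈ Icc (0:ℝ) T, ∀ ε ∈ Ioc (0:ℝ) 1,
      (Pmat a ε t * AmatC a t - (AmatC a t)ᵀ * Pmat a ε t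
        = !![0, ((ε ^ 2 : ℝ) : ℂ); -((ε ^ 2 : ℝ) : ℂ), 0]) ∧
      ∀ V : EuclideanSpace ℂ (Fin 2),
        ‖(inner ℂ ((Matrix.toEuclideanCLM (𝕜 := ℂ)
              (Pmat a ε t * AmatC a t - (AmatC a t)ᵀ * Pmat a ε t)) V) V : ℂ)‖
          ≤ ε * ((inner ℂ ((Matrix.toEuclideanCLM (𝕜 := ℂ) (Pmat a ε t)) V) V : ℂ)).re := by
  intro t ht ε hε
  have ha : 0 ≤ a t := ha_nonneg t ht
  have hε0 : 0 < ε := hε.1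
  have hcomm : Pmat a ε t * AmatC a t - (AmatC a t)ᵀ * Pmat a ε t
      = !![0, ((ε ^ 2 : ℝ) : ℂ); -((ε ^ 2 : ℝ) : ℂ), 0] := by
    ext i j
    fin_cases i <;> fin_cases j <;>
      simp [Pmat, AmatC, Matrix.mul_apply, Fin.sum_univ_two, Matrix.vecHead, Matrix.vecTail]
  refine ⟨hcomm, fun V => ?_⟩
  rw [hcomm, _root_.inner_toEuclideanCLM, _root_.inner_toEuclideanCLM]
  simp only [Pmat, Matrix.of_apply, Matrix.cons_val', Matrix.cons_val_zero, Matrix.cons_val_one,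
    Matrix.head_cons, Matrix.empty_val', Matrix.cons_val_fin_one, Matrix.head_fin_const,
    zero_mul, one_mul, mul_zero, add_zero, zero_add, map_add, _root_.map_mul, map_neg, map_zero,
    _root_.map_one, Complex.conj_ofReal, neg_mul]
  set v0 := V 0
  set v1 := V 1
  have hL : ‖((ε ^ 2 : ℝ) : ℂ) * starRingEnd ℂ v1 * v0
        + -(((ε ^ 2 : ℝ) : ℂ) * starRingEnd ℂ v0 * v1)‖
      ≤ 2 * ε ^ 2 * (‖v0‖ * ‖v1‖) := by
    calc ‖((ε ^ 2 : ℝ) : ℂ) * starRingEnd ℂ v1 * v0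
          + -(((ε ^ 2 : ℝ) : ℂ) * starRingEnd ℂ v0 * v1)‖
        ≤ ‖((ε ^ 2 : ℝ) : ℂ) * starRingEnd ℂ v1 * v0‖
          + ‖-(((ε ^ 2 : ℝ) : ℂ) * starRingEnd ℂ v0 * v1)‖ := norm_add_le _ _
      _ = 2 * ε ^ 2 * (‖v0‖ * ‖v1‖) := by
          simp only [norm_neg, norm_mul, Complex.norm_conj,
            Complex.norm_real, Real.norm_eq_abs, abs_of_pos (pow_pos hε0 2)]
          ring
  have hre : ((((a t + ε ^ 2:ℝ)):ℂ) * (starRingEnd ℂ) v0 * v0 + (starRingEnd ℂ) v1 * v1).re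
      = (a t + ε ^ 2) * ((v0.re) ^ 2 + (v0.im) ^ 2) + ((v1.re) ^ 2 + (v1.im) ^ 2) := by
    simp [Complex.add_re, Complex.mul_re, Complex.mul_im, Complex.conj_re, Complex.conj_im,
      ← Complex.ofReal_pow]
    ring
  have h0 : (v0.re) ^ 2 + (v0.im) ^ 2 = (‖v0‖) ^ 2 := by
    rw [Complex.sq_norm, Complex.normSq_apply]; ring
  have h1 : (v1.re) ^ 2 + (v1.im) ^ 2 = (‖v1‖) ^ 2 := by
    rw [Complex.sq_norm, Complex.normSq_apply]; ring
  rw [hre, h0, h1]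
  exact real_bound ε (a t) (‖v0‖) (‖v1‖) _ hε0 ha hL
end

section
/- Let T>0 and 0<α<2. Assume a:ℝ→ℝ is Hölder continuous of order α, bounded, with a(t) ≥ 0 for all t, and q:[0,T]→ℝ is essentially bounded. Let s satisfy 1 ≤ s < 1 + α/2, and let c₀, A > 0. Then there exist constants C, K > 0, depending only on T, α, ‖a‖_{C^α}, ‖q‖_{L^∞}, s, c₀ and A (and independent of λ), such that for every λ ≥ 0, every continuous f:[0,T]→ℂ with |f(t)| ≤ c₀ e^{−A(1+λ)^{1/(2s)}} for all t, and every twice continuously differentiable v:[0,T]→ℂ satisfying v''(t) + λ a(t) v(t) + q(t) v(t) = f(t) on [0,T], one has (1+λ)|v(t)|² + |v'(t)|² ≤ C e^{K(1+λ)^{1/(2s)}} ( (1+λ)|v(0)|² + |v'(0)|² + 1 ) for all t ∈ [0,T]. -/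
open Set MeasureTheory

lemma holder_cont {a : ℝ → ℝ} {M α : ℝ} (hα : 0 < α)
    (h : ∀ t u : ℝ, |a t - a u| ≤ M * |t - u| ^ α) : Continuous a := by
  rw [continuous_iff_continuousAt]
  intro u
  have h0 : Filter.Tendsto (fun t => a t - a u) (nhds u) (nhds 0) := by
    apply squeeze_zero_norm (fun t => h t u)
    have h1 : Filter.Tendsto (fun t : ℝ => |t - u|) (nhds u) (nhds 0) := by
      have : Filter.Tendsto (fun t : ℝ => t - u) (nhds u) (nhds (u - u)) :=
        (continuous_id.sub continuous_const).tendsto u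
      rw [sub_self] at this
      simpa using this.abs
    have h2 := (h1.rpow_const (Or.inr hα.le)).const_mul M
    rw [Real.zero_rpow hα.ne', mul_zero] at h2
    exact h2
  have := h0.add_const (a u)
  simp at this; exact this

lemma sq_norm_complex (z : ℂ) : ‖z‖ ^ 2 = z.re * z.re + z.im * z.im := by
  rw [Complex.sq_norm, Complex.normSq_apply]

lemma hasDerivAt_normsq {v : ℝ → ℂ} {w : ℂ} {t : ℝ} (h : HasDerivAt v w t) :
    HasDerivAt (fun t => ‖v t‖ ^ 2) (2 * ((starRingEnd ℂ) (v t) * w).re) t := by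
  have hre : HasDerivAt (fun t => (v t).re) w.re t :=
    (Complex.reCLM.hasFDerivAt.comp_hasDerivAt t h)
  have him : HasDerivAt (fun t => (v t).im) w.im t :=
    (Complex.imCLM.hasFDerivAt.comp_hasDerivAt t h)
  have hsum : HasDerivAt (fun t => (v t).re * (v t).re + (v t).im * (v t).im)
      (w.re * (v t).re + (v t).re * w.re + (w.im * (v t).im + (v t).im * w.im)) t :=
    (hre.mul hre).add (him.mul him)
  have heq : (fun t => ‖v t‖ ^ 2) = fun t => (v t).re * (v t).re + (v t).im * (v t).im := by
    funext x; exact sq_norm_complex _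
  rw [heq]
  convert hsum using 1
  simp [Complex.mul_re]
  ring

lemma hasDerivAt_slide {a : ℝ → ℝ} (ha : Continuous a) (ε t : ℝ) :
    HasDerivAt (fun x => ∫ u in x..(x+ε), a u) (a (t+ε) - a t) t := by
  have h1 : ∀ x : ℝ, ∫ u in x..(x+ε), a u =
      (∫ u in (0:ℝ)..(x+ε), a u) - ∫ u in (0:ℝ)..x, a u := by
    intro x
    rw [eq_sub_iff_add_eq, add_comm]
    exact intervalIntegral.integral_add_adjacent_intervals
      (ha.intervalIntegrable _ _) (ha.intervalIntegrable _ _)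
  have hF : ∀ x : ℝ, HasDerivAt (fun y => ∫ u in (0:ℝ)..y, a u) (a x) x := fun x =>
    intervalIntegral.integral_hasDerivAt_right (ha.intervalIntegrable _ _)
      (ha.stronglyMeasurableAtFilter _ _) ha.continuousAt
  have h2 : HasDerivAt (fun x : ℝ => ∫ u in (0:ℝ)..(x+ε), a u) (a (t+ε)) t := by
    have := (hF (t+ε)).comp t ((hasDerivAt_id t).add_const ε)
    simp at this; exact this
  have h3 := h2.sub (hF t)
  refine HasDerivAt.congr_of_eventuallyEq h3 ?_
  filter_upwards with x using h1 x

set_option maxHeartbeats 2000000 in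
/-- Case 4 Fourier-mode energy estimate: nonnegative Hölder speed of order `α ∈ (0,2)`,
yielding Gevrey well-posedness for orders `1 ≤ s < 1 + α/2`. -/
theorem gevrey_energy_estimate_holder_degenerate
    (T α M Ma Mq s c₀ A : ℝ) (hT : 0 < T) (hα0 : 0 < α) (hα2 : α < 2)
    (a q : ℝ → ℝ)
    (hHol : ∀ t u : ℝ, |a t - a u| ≤ M * |t - u| ^ α)
    (ha_bd : ∀ t, |a t| ≤ Ma)
    (ha_nonneg : ∀ t, 0 ≤ a t)
    (hq_bd : ∀ t ∈ Icc (0:ℝ) T, |q t| ≤ Mq)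
    (hs1 : 1 ≤ s) (hs2 : s < 1 + α / 2)
    (hc₀ : 0 < c₀) (hA : 0 < A) :
    ∃ C > 0, ∃ K > 0, ∀ lam : ℝ, 0 ≤ lam → ∀ f v v' v'' : ℝ → ℂ,
      ContinuousOn f (Icc (0:ℝ) T) →
      (∀ t ∈ Icc (0:ℝ) T, ‖f t‖ ≤ c₀ * Real.exp (-A * (1 + lam) ^ (1 / (2 * s)))) →
      (∀ t ∈ Icc (0:ℝ) T, HasDerivAt v (v' t) t) →
      (∀ t ∈ Icc (0:ℝ) T, HasDerivAt v' (v'' t) t) →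
      ContinuousOn v'' (Icc (0:ℝ) T) →
      (∀ t ∈ Icc (0:ℝ) T, v'' t + (lam : ℂ) * (a t : ℂ) * v t + (q t : ℂ) * v t = f t) →
      ∀ t ∈ Icc (0:ℝ) T,
        (1 + lam) * ‖v t‖ ^ 2 + ‖v' t‖ ^ 2 ≤
          C * Real.exp (K * (1 + lam) ^ (1 / (2 * s))) *
            ((1 + lam) * ‖v 0‖ ^ 2 + ‖v' 0‖ ^ 2 + 1) := by
  have hs0 : (0:ℝ) < s := lt_of_lt_of_le one_pos hs1
  have hM0 : 0 ≤ M := by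
    have h := hHol 0 1
    have h2 : (0:ℝ) ≤ M * |(0:ℝ) - 1| ^ α := le_trans (abs_nonneg _) h
    simpa using h2
  have hMa0 : 0 ≤ Ma := le_trans (abs_nonneg _) (ha_bd 0)
  have hMq0 : 0 ≤ Mq := le_trans (abs_nonneg _) (hq_bd 0 ⟨le_refl _, hT.le⟩)
  have ha_cont : Continuous a := holder_cont hα0 hHol
  set γ : ℝ := (s - 1) / (s * α) with hγdef
  clear_value γ
  have hγ0 : 0 ≤ γ := by rw [hγdef]; exact div_nonneg (by linarith) (by positivity)
  have hexp1 : 1 - γ * (α - 1) ≤ 3 / (2 * s) := by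
    have h1 : γ * (α - 1) = ((s-1)*(α-1))/(s*α) := by rw [hγdef]; ring
    have h2 : (2*s-3)/(2*s) ≤ ((s-1)*(α-1))/(s*α) := by
      rw [div_le_div_iff₀ (by positivity) (by positivity)]
      nlinarith [mul_nonneg hs0.le (by linarith : (0:ℝ) ≤ α + 2 - 2*s)]
    have h3 : 1 - 3/(2*s) = (2*s-3)/(2*s) := by field_simp
    linarith
  have hexp2 : 1 - γ * α = 1 / s := by
    rw [hγdef]; field_simp; ring
  refine ⟨Ma + 1 + c₀^2, by positivity, (2*M + Mq + 2)*T + 2*s, by positivity, ?_⟩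
  intro lam hlam f v v' v'' hfc hfb hv hv' hv''c hode
  have hb0 : (0:ℝ) < 1 + lam := by linarith
  have hb1 : (1:ℝ) ≤ 1 + lam := by linarith
  set X := (1 + lam) ^ (1 / (2 * s)) with hXdef
  clear_value X
  have hX1 : 1 ≤ X := by rw [hXdef]; exact Real.one_le_rpow hb1 (by positivity)
  have hX0 : 0 < X := lt_of_lt_of_le one_pos hX1
  set β := (1 + lam) ^ (1 / s) with hβdef
  clear_value β
  have hβ1 : 1 ≤ β := by rw [hβdef]; exact Real.one_le_rpow hb1 (by positivity)
  have hXβ : X * X = β := by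
    rw [hXdef, hβdef, ← Real.rpow_add hb0]
    congr 1
    ring_nf
  have hβlam : β ≤ 1 + lam := by
    rw [hβdef]
    calc (1+lam) ^ (1/s) ≤ (1+lam) ^ (1:ℝ) :=
      Real.rpow_le_rpow_of_exponent_le hb1 (by rw [div_le_one hs0]; linarith)
    _ = 1 + lam := Real.rpow_one _
  set ε := (1 + lam) ^ (-γ) with hεdef
  clear_value ε
  have hε0 : 0 < ε := by rw [hεdef]; exact Real.rpow_pos_of_pos hb0 _
  -- key exponent comparisons
  have hXβ3 : X * β = (1+lam) ^ (3/(2*s)) := by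
    rw [hXdef, hβdef, ← Real.rpow_add hb0]
    congr 1
    ring_nf
  have key1 : lam * ε ^ (α - 1) ≤ X * β := by
    have e1 : ε ^ (α-1) = (1+lam) ^ (-γ*(α-1)) := by
      rw [hεdef, ← Real.rpow_mul hb0.le]
    have e2 : lam * ε ^ (α-1) ≤ (1+lam) ^ (1 - γ*(α-1)) := by
      rw [e1]
      calc lam * (1+lam)^(-γ*(α-1))
          ≤ (1+lam) * (1+lam)^(-γ*(α-1)) := by
            apply mul_le_mul_of_nonneg_right (by linarith) (Real.rpow_nonneg hb0.le _)
        _ = (1+lam)^(1:ℝ) * (1+lam)^(-γ*(α-1)) := by rw [Real.rpow_one]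
        _ = (1+lam)^(1 - γ*(α-1)) := by rw [← Real.rpow_add hb0]; ring_nf
    calc lam * ε ^ (α-1) ≤ (1+lam) ^ (1 - γ*(α-1)) := e2
      _ ≤ (1+lam) ^ (3/(2*s)) := Real.rpow_le_rpow_of_exponent_le hb1 hexp1
      _ = X * β := hXβ3.symm
  have key2 : lam * ε ^ α ≤ X * X := by
    have e1 : ε ^ α = (1+lam) ^ (-γ*α) := by
      rw [hεdef, ← Real.rpow_mul hb0.le]
    have e2 : lam * ε ^ α ≤ (1+lam) ^ (1 - γ*α) := by
      rw [e1]
      calc lam * (1+lam)^(-γ*α)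
          ≤ (1+lam) * (1+lam)^(-γ*α) := by
            apply mul_le_mul_of_nonneg_right (by linarith) (Real.rpow_nonneg hb0.le _)
        _ = (1+lam)^(1:ℝ) * (1+lam)^(-γ*α) := by rw [Real.rpow_one]
        _ = (1+lam)^(1 - γ*α) := by rw [← Real.rpow_add hb0]; ring_nf
    calc lam * ε ^ α ≤ (1+lam) ^ (1 - γ*α) := e2
      _ = (1+lam) ^ (1/s) := by rw [hexp2]
      _ = β := hβdef.symm
      _ = X * X := hXβ.symm
  -- the slid average of a
  set aε : ℝ → ℝ := fun x => ε⁻¹ * ∫ u in x..(x+ε), a u with haεdef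
  clear_value aε
  have haε_deriv : ∀ t : ℝ, HasDerivAt aε (ε⁻¹ * (a (t+ε) - a t)) t := by
    intro t
    rw [haεdef]
    exact (hasDerivAt_slide ha_cont ε t).const_mul ε⁻¹
  have haε_nonneg : ∀ t : ℝ, 0 ≤ aε t := by
    intro t
    simp only [haεdef]
    apply mul_nonneg (inv_nonneg.2 hε0.le)
    exact intervalIntegral.integral_nonneg (by linarith) (fun u _ => ha_nonneg u)
  have haε_le : ∀ t : ℝ, aε t ≤ Ma := by
    intro t
    simp only [haεdef]
    have h1 : |∫ u in t..(t+ε), a u| ≤ Ma * |t + ε - t| := by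
      rw [← Real.norm_eq_abs]
      apply intervalIntegral.norm_integral_le_of_norm_le_const
      intro x _
      simpa using ha_bd x
    rw [add_sub_cancel_left, abs_of_pos hε0] at h1
    have h2 : (∫ u in t..(t+ε), a u) ≤ Ma * ε := le_trans (le_abs_self _) h1
    calc ε⁻¹ * ∫ u in t..(t+ε), a u ≤ ε⁻¹ * (Ma * ε) := mul_le_mul_of_nonneg_left h2 (inv_nonneg.2 hε0.le)
      _ = Ma := by field_simp
  have haε_close : ∀ t : ℝ, |aε t - a t| ≤ M * ε ^ α := by
    intro t
    have h1 : aε t - a t = ε⁻¹ * ∫ u in t..(t+ε), (a u - a t) := by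
      rw [intervalIntegral.integral_sub (ha_cont.intervalIntegrable _ _)
        (intervalIntegrable_const), intervalIntegral.integral_const, haεdef]
      simp only [smul_eq_mul, add_sub_cancel_left]
      field_simp
    have h2 : |∫ u in t..(t+ε), (a u - a t)| ≤ (M * ε ^ α) * |t + ε - t| := by
      rw [← Real.norm_eq_abs]
      apply intervalIntegral.norm_integral_le_of_norm_le_const
      intro x hx
      have hxI : x ∈ Set.Ioc t (t+ε) := by
        rwa [Set.uIoc_of_le (by linarith)] at hx
      have hle : |x - t| ≤ ε := by
        rw [abs_of_nonneg (by linarith [hxI.1.le])]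
        linarith [hxI.2]
      have h3 : |x - t| ^ α ≤ ε ^ α := Real.rpow_le_rpow (abs_nonneg _) hle hα0.le
      calc ‖a x - a t‖ = |a x - a t| := rfl
        _ ≤ M * |x - t| ^ α := hHol x t
        _ ≤ M * ε ^ α := mul_le_mul_of_nonneg_left h3 hM0
    rw [add_sub_cancel_left, abs_of_pos hε0] at h2
    calc |aε t - a t| = ε⁻¹ * |∫ u in t..(t+ε), (a u - a t)| := by
          rw [h1, abs_mul, abs_of_nonneg (inv_nonneg.2 hε0.le)]
      _ ≤ ε⁻¹ * ((M * ε ^ α) * ε) :=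
          mul_le_mul_of_nonneg_left h2 (inv_nonneg.2 hε0.le)
      _ = M * ε ^ α := by field_simp
  have haε'_bd : ∀ t : ℝ, |ε⁻¹ * (a (t+ε) - a t)| ≤ M * ε ^ (α - 1) := by
    intro t
    have h1 : |a (t+ε) - a t| ≤ M * ε ^ α := by
      have := hHol (t+ε) t
      rwa [add_sub_cancel_left, abs_of_pos hε0] at this
    have h2 : M * ε ^ (α-1) = ε⁻¹ * (M * ε ^ α) := by
      rw [Real.rpow_sub hε0, Real.rpow_one]
      field_simp
    rw [abs_mul, abs_of_nonneg (inv_nonneg.2 hε0.le), h2]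
    exact mul_le_mul_of_nonneg_left h1 (inv_nonneg.2 hε0.le)
  -- energy function
  set E : ℝ → ℝ := fun x => (lam * aε x + β) * ‖v x‖^2 + ‖v' x‖^2 with hEdef
  clear_value E
  have hcoef : ∀ x : ℝ, 0 ≤ lam * aε x + β := fun x => by
    linarith only [mul_nonneg hlam (haε_nonneg x), hβ1]
  have hE_nonneg : ∀ x : ℝ, 0 ≤ E x := by
    intro x
    simp only [hEdef]
    exact add_nonneg (mul_nonneg (hcoef x) (sq_nonneg _)) (sq_nonneg _)
  have hE_lb : ∀ x : ℝ, β * ‖v x‖^2 + ‖v' x‖^2 ≤ E x := by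
    intro x
    have hEx : E x = (lam * aε x + β) * ‖v x‖^2 + ‖v' x‖^2 := by rw [hEdef]
    linarith only [hEx, mul_nonneg (mul_nonneg hlam (haε_nonneg x)) (sq_nonneg ‖v x‖)]
  set L := (2*M + Mq + 2) * X with hLdef
  clear_value L
  have hL1 : 1 ≤ L := by
    rw [hLdef]
    calc (1:ℝ) = 1*1 := by ring
      _ ≤ (2*M + Mq + 2)*X := mul_le_mul (by linarith) hX1 zero_le_one (by linarith)
  have hkey : ∀ t ∈ Icc (0:ℝ) T, ∃ D',
      HasDerivAt (fun x => (E x + c₀^2) * Real.exp (-(L*x))) D' t ∧ D' ≤ 0 := by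
    intro t ht
    have h1 := hasDerivAt_normsq (hv t ht)
    have h2 := hasDerivAt_normsq (hv' t ht)
    have h3 : HasDerivAt (fun x => lam * aε x + β) (lam * (ε⁻¹ * (a (t+ε) - a t))) t :=
      ((haε_deriv t).const_mul lam).add_const β
    have hDE : HasDerivAt E
        (lam * (ε⁻¹ * (a (t+ε) - a t)) * ‖v t‖^2
          + (lam * aε t + β) * (2 * ((starRingEnd ℂ) (v t) * v' t).re)
          + 2 * ((starRingEnd ℂ) (v' t) * v'' t).re) t := by
      rw [hEdef]
      exact (h3.mul h1).add h2
    have hveq : v'' t = f t - (lam:ℂ)*((a t):ℂ)*v t - ((q t):ℂ)*v t := by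
      linear_combination (hode t ht)
    have hre : ((starRingEnd ℂ) (v' t) * v'' t).re
        = ((starRingEnd ℂ) (v' t) * f t).re
          - lam * a t * ((starRingEnd ℂ) (v t) * v' t).re
          - q t * ((starRingEnd ℂ) (v t) * v' t).re := by
      rw [hveq]
      simp [Complex.mul_re, Complex.mul_im, Complex.sub_re, Complex.sub_im]
      ring
    have hn : (0:ℝ) ≤ ‖v t‖ := norm_nonneg _
    have hm : (0:ℝ) ≤ ‖v' t‖ := norm_nonneg _
    have hRb : |((starRingEnd ℂ) (v t) * v' t).re| ≤ ‖v t‖ * ‖v' t‖ := by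
      have h := Complex.abs_re_le_norm ((starRingEnd ℂ) (v t) * v' t)
      rwa [norm_mul, RCLike.norm_conj] at h
    have hRfb : |((starRingEnd ℂ) (v' t) * f t).re| ≤ ‖v' t‖ * ‖f t‖ := by
      have h := Complex.abs_re_le_norm ((starRingEnd ℂ) (v' t) * f t)
      rwa [norm_mul, RCLike.norm_conj] at h
    have hf_le : ‖f t‖ ≤ c₀ := by
      have h := hfb t ht
      have hexp1' : Real.exp (-A*X) ≤ 1 := Real.exp_le_one_iff.2
        (by rw [neg_mul]; exact neg_nonpos.2 (mul_nonneg hA.le (by linarith)))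
      calc ‖f t‖ ≤ c₀ * Real.exp (-A*X) := h
        _ ≤ c₀ * 1 := mul_le_mul_of_nonneg_left hexp1' hc₀.le
        _ = c₀ := mul_one _
    have hElb := hE_lb t
    have hEnn := hE_nonneg t
    have hElb' : X*X*‖v t‖^2 + ‖v' t‖^2 ≤ E t := by rw [hXβ]; exact hElb
    have hamg : 2*(X*‖v t‖)*‖v' t‖ ≤ (X*‖v t‖)^2 + ‖v' t‖^2 := two_mul_le_add_sq _ _
    have hB1 : lam * (ε⁻¹ * (a (t+ε) - a t)) * ‖v t‖^2 ≤ M * X * E t := by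
      have hb1' : lam * (ε⁻¹ * (a (t+ε) - a t)) * ‖v t‖^2
          ≤ lam * (M * ε^(α-1)) * ‖v t‖^2 := by
        apply mul_le_mul_of_nonneg_right _ (sq_nonneg _)
        exact mul_le_mul_of_nonneg_left (le_trans (le_abs_self _) (haε'_bd t)) hlam
      have hb2' : M * (lam * ε^(α-1)) * ‖v t‖^2 ≤ M * (X*β) * ‖v t‖^2 :=
        mul_le_mul_of_nonneg_right (mul_le_mul_of_nonneg_left key1 hM0) (sq_nonneg _)
      have hb3' : M * (X*β) * ‖v t‖^2 ≤ M * X * E t := by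
        have he : M*(X*β)*‖v t‖^2 = M*X*(β*‖v t‖^2) := by ring
        rw [he]
        exact mul_le_mul_of_nonneg_left (by linarith only [hElb, sq_nonneg ‖v' t‖])
          (mul_nonneg hM0 hX0.le)
      linarith only [hb1', hb2', hb3']
    have hB2 : 2 * (lam * (aε t - a t)) * ((starRingEnd ℂ) (v t) * v' t).re
        ≤ M * X * E t := by
      have ha1 : lam*(aε t - a t)*((starRingEnd ℂ) (v t) * v' t).re
          ≤ lam*(M*ε^α)*(‖v t‖*‖v' t‖) := by
        calc lam*(aε t - a t)*((starRingEnd ℂ) (v t) * v' t).re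
            ≤ |lam*(aε t - a t)*((starRingEnd ℂ) (v t) * v' t).re| := le_abs_self _
          _ = lam * |aε t - a t| * |((starRingEnd ℂ) (v t) * v' t).re| := by
              rw [abs_mul, abs_mul, abs_of_nonneg hlam]
          _ ≤ lam*(M*ε^α)*(‖v t‖*‖v' t‖) := by
              apply mul_le_mul (mul_le_mul_of_nonneg_left (haε_close t) hlam) hRb
                (abs_nonneg _) (by positivity)
      have ha2 : lam*(M*ε^α)*(‖v t‖*‖v' t‖) ≤ M*(X*X)*(‖v t‖*‖v' t‖) := by
        apply mul_le_mul_of_nonneg_right _ (mul_nonneg hn hm)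
        linarith only [mul_le_mul_of_nonneg_left key2 hM0]
      have ha3 : 2*(M*(X*X))*(‖v t‖*‖v' t‖) ≤ M*X*E t := by
        nlinarith only [mul_le_mul_of_nonneg_left hamg (mul_nonneg hM0 hX0.le),
          mul_le_mul_of_nonneg_left hElb' (mul_nonneg hM0 hX0.le)]
      linarith only [ha1, ha2, ha3]
    have hB3 : 2 * ((β - q t) * ((starRingEnd ℂ) (v t) * v' t).re)
        ≤ (1+Mq) * X * E t := by
      have hqt := abs_le.1 (hq_bd t ht)
      have hc1 : (β - q t)*((starRingEnd ℂ) (v t) * v' t).re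
          ≤ (β+Mq)*(‖v t‖*‖v' t‖) := by
        calc (β - q t)*((starRingEnd ℂ) (v t) * v' t).re
            ≤ |(β - q t)*((starRingEnd ℂ) (v t) * v' t).re| := le_abs_self _
          _ = |β - q t| * |((starRingEnd ℂ) (v t) * v' t).re| := abs_mul _ _
          _ ≤ (β+Mq)*(‖v t‖*‖v' t‖) := by
              apply mul_le_mul (abs_le.2 ⟨by linarith, by linarith⟩) hRb
                (abs_nonneg _) (by positivity)
      have hc2 : 2*((β+Mq)*(‖v t‖*‖v' t‖)) ≤ (1+Mq)*X*E t := by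
        have hc2a : β + Mq ≤ (1+Mq)*(X*X) := by
          have hq2 : 0 ≤ Mq * (X*X - 1) :=
            mul_nonneg hMq0 (by linarith only [hXβ, hβ1])
          linarith only [hXβ, hq2]
        have hc2b := mul_le_mul_of_nonneg_right hc2a (mul_nonneg hn hm)
        have hc2c := mul_le_mul_of_nonneg_left hamg
          (mul_nonneg (by linarith : (0:ℝ) ≤ 1+Mq) hX0.le)
        have hc2d := mul_le_mul_of_nonneg_left hElb'
          (mul_nonneg (by linarith : (0:ℝ) ≤ 1+Mq) hX0.le)
        nlinarith only [hc2b, hc2c, hc2d]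
      linarith only [hc1, hc2]
    have hB4 : 2 * ((starRingEnd ℂ) (v' t) * f t).re ≤ X * E t + c₀^2 := by
      have hd1 : ((starRingEnd ℂ) (v' t) * f t).re ≤ ‖v' t‖ * c₀ :=
        le_trans (le_trans (le_abs_self _) hRfb)
          (mul_le_mul_of_nonneg_left hf_le hm)
      have hd2 : ‖v' t‖^2 ≤ E t := by
        linarith only [hElb, mul_nonneg (by linarith only [hβ1] : (0:ℝ) ≤ β) (sq_nonneg ‖v t‖)]
      linarith only [hd1, hd2, sq_nonneg (‖v' t‖ - c₀),
        mul_nonneg (by linarith only [hX1] : (0:ℝ) ≤ X - 1) hEnn]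
    have hDle : lam * (ε⁻¹ * (a (t+ε) - a t)) * ‖v t‖^2
          + (lam * aε t + β) * (2 * ((starRingEnd ℂ) (v t) * v' t).re)
          + 2 * ((starRingEnd ℂ) (v' t) * v'' t).re
        ≤ L * E t + c₀^2 := by
      rw [hre, hLdef]
      linarith only [hB1, hB2, hB3, hB4]
    have hexpd : HasDerivAt (fun x => Real.exp (-(L*x))) (Real.exp (-(L*t)) * -L) t := by
      have := (((hasDerivAt_id t).const_mul L).neg).exp
      simpa using this
    refine ⟨_, ((hDE.add_const (c₀^2)).mul hexpd), ?_⟩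
    have he0 : (0:ℝ) ≤ Real.exp (-(L*t)) := Real.exp_nonneg _
    have hh := mul_le_mul_of_nonneg_right hDle he0
    linarith only [hh, mul_nonneg (mul_nonneg (by linarith only [hL1] : (0:ℝ) ≤ L - 1)
      (sq_nonneg c₀)) he0]
  have hmono : AntitoneOn (fun x => (E x + c₀^2) * Real.exp (-(L*x))) (Icc (0:ℝ) T) := by
    apply antitoneOn_of_deriv_nonpos (convex_Icc 0 T)
    · intro x hx
      exact ((hkey x hx).choose_spec.1).continuousAt.continuousWithinAt
    · intro x hx
      rw [interior_Icc] at hx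
      exact ((hkey x (Ioo_subset_Icc_self hx)).choose_spec.1).differentiableAt.differentiableWithinAt
    · intro x hx
      rw [interior_Icc] at hx
      obtain ⟨D', hD', hD'le⟩ := hkey x (Ioo_subset_Icc_self hx)
      rw [hD'.deriv]
      exact hD'le
  intro t ht
  have h0T : (0:ℝ) ∈ Icc (0:ℝ) T := ⟨le_refl 0, hT.le⟩
  have hΦle := hmono h0T ht ht.1
  have hΦ0 : (E 0 + c₀^2) * Real.exp (-(L*0)) = E 0 + c₀^2 := by
    simp
  have hEt : E t ≤ (E 0 + c₀^2) * Real.exp (L*T) := by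
    have hh1 : (E t + c₀^2) * Real.exp (-(L*t)) ≤ E 0 + c₀^2 := by
      rw [← hΦ0]; exact hΦle
    have hh2 := mul_le_mul_of_nonneg_right hh1 (Real.exp_nonneg (L*t))
    rw [mul_assoc, ← Real.exp_add] at hh2
    simp only [neg_add_cancel, Real.exp_zero, mul_one] at hh2
    have hh3 : Real.exp (L*t) ≤ Real.exp (L*T) :=
      Real.exp_le_exp.2 (mul_le_mul_of_nonneg_left ht.2 (by linarith : (0:ℝ) ≤ L))
    calc E t ≤ E t + c₀^2 := by linarith only [sq_nonneg c₀]
      _ ≤ (E 0 + c₀^2) * Real.exp (L*t) := hh2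
      _ ≤ (E 0 + c₀^2) * Real.exp (L*T) :=
        mul_le_mul_of_nonneg_left hh3 (by linarith only [hE_nonneg 0, sq_nonneg c₀])
  have hG0nn : (0:ℝ) ≤ (1+lam)*‖v 0‖^2 + ‖v' 0‖^2 := by positivity
  have hE0le : E 0 ≤ (Ma+1)*((1+lam)*‖v 0‖^2 + ‖v' 0‖^2) := by
    have hE0eq : E 0 = (lam * aε 0 + β) * ‖v 0‖^2 + ‖v' 0‖^2 := by rw [hEdef]
    have hcc : lam * aε 0 + β ≤ (Ma+1)*(1+lam) := by
      linarith only [mul_le_mul_of_nonneg_left (haε_le 0) hlam, hβlam, hMa0]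
    linarith only [hE0eq, mul_le_mul_of_nonneg_right hcc (sq_nonneg ‖v 0‖),
      mul_nonneg hMa0 (sq_nonneg ‖v' 0‖)]
  have hGle : (1+lam)*‖v t‖^2 + ‖v' t‖^2 ≤ (1+lam) * E t := by
    have hEt_eq : E t = (lam * aε t + β) * ‖v t‖^2 + ‖v' t‖^2 := by rw [hEdef]
    have hc1 : (1:ℝ) ≤ lam * aε t + β := by
      linarith only [mul_nonneg hlam (haε_nonneg t), hβ1]
    have hh1 : ‖v t‖^2 ≤ (lam * aε t + β) * ‖v t‖^2 := by
      nlinarith only [hc1, sq_nonneg ‖v t‖]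
    have hEt_eq' : (1+lam) * E t
        = (1+lam) * ((lam * aε t + β) * ‖v t‖^2 + ‖v' t‖^2) := by rw [hEt_eq]
    linarith only [mul_le_mul_of_nonneg_left hh1 hb0.le,
      mul_nonneg hlam (sq_nonneg ‖v' t‖), hEt_eq']
  have hlamexp : 1 + lam ≤ Real.exp (2*s*X) := by
    have hlx : Real.log X = (1/(2*s)) * Real.log (1+lam) := by
      rw [hXdef]; exact Real.log_rpow hb0 _
    have hll : Real.log (1+lam) = 2*s*Real.log X := by
      rw [hlx]; field_simp
    calc 1+lam = Real.exp (Real.log (1+lam)) := (Real.exp_log hb0).symm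
      _ = Real.exp (2*s*Real.log X) := by rw [hll]
      _ ≤ Real.exp (2*s*X) := Real.exp_le_exp.2
        (mul_le_mul_of_nonneg_left (Real.log_le_self hX0.le) (by linarith only [hs0] : (0:ℝ) ≤ 2*s))
  have hfin1 : E t ≤ ((Ma+1)*((1+lam)*‖v 0‖^2 + ‖v' 0‖^2) + c₀^2) * Real.exp (L*T) := by
    calc E t ≤ (E 0 + c₀^2)*Real.exp (L*T) := hEt
      _ ≤ ((Ma+1)*((1+lam)*‖v 0‖^2 + ‖v' 0‖^2) + c₀^2)*Real.exp (L*T) :=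
        mul_le_mul_of_nonneg_right (by linarith only [hE0le]) (Real.exp_nonneg _)
  have hY : (0:ℝ) ≤ (Ma+1)*((1+lam)*‖v 0‖^2 + ‖v' 0‖^2) + c₀^2 := by
    linarith only [mul_nonneg (by linarith only [hMa0] : (0:ℝ) ≤ Ma+1) hG0nn, sq_nonneg c₀]
  calc (1+lam)*‖v t‖^2 + ‖v' t‖^2 ≤ (1+lam) * E t := hGle
    _ ≤ (1+lam) * (((Ma+1)*((1+lam)*‖v 0‖^2 + ‖v' 0‖^2) + c₀^2) * Real.exp (L*T)) :=
        mul_le_mul_of_nonneg_left hfin1 hb0.le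
    _ ≤ Real.exp (2*s*X) * (((Ma+1)*((1+lam)*‖v 0‖^2 + ‖v' 0‖^2) + c₀^2) * Real.exp (L*T)) :=
        mul_le_mul_of_nonneg_right hlamexp (mul_nonneg hY (Real.exp_nonneg _))
    _ = ((Ma+1)*((1+lam)*‖v 0‖^2 + ‖v' 0‖^2) + c₀^2) * Real.exp (((2*M + Mq + 2)*T + 2*s) * X) := by
        rw [hLdef]
        rw [show Real.exp (2*s*X) * (((Ma+1)*((1+lam)*‖v 0‖^2 + ‖v' 0‖^2) + c₀^2) *
            Real.exp ((2*M + Mq + 2)*X*T))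
          = ((Ma+1)*((1+lam)*‖v 0‖^2 + ‖v' 0‖^2) + c₀^2) *
            (Real.exp ((2*M + Mq + 2)*X*T) * Real.exp (2*s*X)) from by ring,
          ← Real.exp_add]
        ring_nf
    _ ≤ (Ma + 1 + c₀^2) * Real.exp (((2*M + Mq + 2)*T + 2*s) * X) * ((1+lam)*‖v 0‖^2 + ‖v' 0‖^2 + 1) := by
        have hfac : (Ma+1)*((1+lam)*‖v 0‖^2 + ‖v' 0‖^2) + c₀^2
            ≤ (Ma+1+c₀^2)*(((1+lam)*‖v 0‖^2 + ‖v' 0‖^2) + 1) := by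
          linarith only [mul_nonneg (sq_nonneg c₀) hG0nn, hMa0]
        linarith only [mul_le_mul_of_nonneg_right hfac
          (Real.exp_nonneg (((2*M + Mq + 2)*T + 2*s) * X))]
end

section
/- Let T, ã₀, c₁, c₂ > 0 and L₁, L₂ ∈ ℕ, and set L = max(L₁+1, L₂). Then there exist constants C, K > 0, depending only on T, ã₀, c₁ and c₂, such that the following holds: for every ω ∈ (0,1], every differentiable a:[0,T]→ℝ with ã₀ ≤ a(t) ≤ c₁ ω^{−L₁} and |a'(t)| ≤ c₁ ω^{−L₁−1} for all t, every q:[0,T]→ℝ with |q(t)| ≤ c₂ ω^{−L₂} for all t, every λ ≥ 0, every continuous f:[0,T]→ℂ, and every twice continuously differentiable v:[0,T]→ℂ satisfying v''(t) + λ a(t) v(t) + q(t) v(t) = f(t) on [0,T], one has (1+λ)|v(t)|² + |v'(t)|² ≤ C e^{K ω^{−L}} ( (1+λ)|v(0)|² + |v'(0)|² + ∫₀ᵀ |f(τ)|² dτ ) for all t ∈ [0,T]. -/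
set_option maxHeartbeats 2000000


open Set MeasureTheory

/-- The parameterised Fourier-mode energy estimate with constants `C`, `K`, for coefficients
satisfying the moderateness bounds of order `ω^{-L₁}`, `ω^{-L₁-1}`, `ω^{-L₂}`; the energy
grows at most like `C e^{K ω^{-L}}` with `L = max(L₁+1, L₂)`. -/
def EnergyEstimateWith (T a₀ c₁ c₂ : ℝ) (L₁ L₂ : ℕ) (C K : ℝ) : Prop :=
  ∀ ω ∈ Set.Ioc (0:ℝ) 1, ∀ a a' q : ℝ → ℝ,
    (∀ t ∈ Set.Icc (0:ℝ) T, HasDerivAt a (a' t) t) →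
    (∀ t ∈ Set.Icc (0:ℝ) T, a₀ ≤ a t ∧ a t ≤ c₁ * ω ^ (-(L₁ : ℤ))) →
    (∀ t ∈ Set.Icc (0:ℝ) T, |a' t| ≤ c₁ * ω ^ (-(L₁ : ℤ) - 1)) →
    (∀ t ∈ Set.Icc (0:ℝ) T, |q t| ≤ c₂ * ω ^ (-(L₂ : ℤ))) →
    ∀ lam : ℝ, 0 ≤ lam → ∀ f v v' v'' : ℝ → ℂ,
      ContinuousOn f (Set.Icc (0:ℝ) T) →
      (∀ t ∈ Set.Icc (0:ℝ) T, HasDerivAt v (v' t) t) →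
      (∀ t ∈ Set.Icc (0:ℝ) T, HasDerivAt v' (v'' t) t) →
      ContinuousOn v'' (Set.Icc (0:ℝ) T) →
      (∀ t ∈ Set.Icc (0:ℝ) T,
        v'' t + (lam : ℂ) * (a t : ℂ) * v t + (q t : ℂ) * v t = f t) →
      ∀ t ∈ Set.Icc (0:ℝ) T,
        (1 + lam) * ‖v t‖ ^ 2 + ‖v' t‖ ^ 2 ≤
          C * Real.exp (K * ω ^ (-((max (L₁ + 1) L₂ : ℕ) : ℤ))) *
            ((1 + lam) * ‖v 0‖ ^ 2 + ‖v' 0‖ ^ 2 + ∫ τ in (0:ℝ)..T, ‖f τ‖ ^ 2)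


private lemma key_alg (a₀ c₁ c₂ W lam av a'v qv X Y X' Y' FR FI : ℝ)
    (ha₀ : 0 < a₀) (hc₁ : 0 < c₁) (hc₂ : 0 < c₂) (hW1 : 1 ≤ W) (hlam : 0 ≤ lam)
    (ha1 : a₀ ≤ av) (ha2 : |a'v| ≤ c₁ * W) (hq2 : |qv| ≤ c₂ * W) :
    lam * a'v * (X^2 + Y^2) + 2*(X*X' + Y*Y') + (2*(X'*FR + Y'*FI) - (FR^2 + FI^2))
      + (-(2*qv*(X*X' + Y*Y')))
    ≤ (c₁/a₀ + 2 + c₂) * W * ((1 + lam*av)*(X^2 + Y^2) + (X'^2 + Y'^2)) := by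
  have hW0 : (0:ℝ) < W := lt_of_lt_of_le one_pos hW1
  have hn : (0:ℝ) ≤ X^2 + Y^2 := by positivity
  have hp : (0:ℝ) ≤ X'^2 + Y'^2 := by positivity
  have hE : (0:ℝ) ≤ (1 + lam*av)*(X^2 + Y^2) + (X'^2 + Y'^2) := by
    nlinarith [mul_nonneg (mul_nonneg hlam (ha₀.le.trans ha1)) hn]
  have hs : |2*(X*X' + Y*Y')| ≤ (X^2 + Y^2) + (X'^2 + Y'^2) := by
    rw [abs_le]
    constructor
    · nlinarith [sq_nonneg (X+X'), sq_nonneg (Y+Y')]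
    · nlinarith [sq_nonneg (X-X'), sq_nonneg (Y-Y')]
  have hNP : (X^2 + Y^2) + (X'^2 + Y'^2) ≤ (1 + lam*av)*(X^2 + Y^2) + (X'^2 + Y'^2) := by
    nlinarith [mul_nonneg (mul_nonneg hlam (ha₀.le.trans ha1)) hn]
  have hA1 : lam * a'v * (X^2 + Y^2) ≤
      (c₁/a₀) * W * ((1 + lam*av)*(X^2 + Y^2) + (X'^2 + Y'^2)) := by
    have h1 : a'v ≤ c₁ * W := (le_abs_self _).trans ha2
    have h2 : lam * a'v * (X^2 + Y^2) ≤ lam * (c₁ * W) * (X^2 + Y^2) := by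
      nlinarith [mul_le_mul_of_nonneg_left h1 (mul_nonneg hlam hn)]
    have h3 : lam * a₀ * (X^2 + Y^2) ≤ (1 + lam*av)*(X^2 + Y^2) + (X'^2 + Y'^2) := by
      nlinarith [mul_nonneg (mul_nonneg hlam (sub_nonneg.2 ha1)) hn]
    have hc : (0:ℝ) ≤ (c₁/a₀) * W := by positivity
    calc lam * a'v * (X^2 + Y^2) ≤ lam * (c₁ * W) * (X^2 + Y^2) := h2
      _ = (c₁/a₀) * W * (lam * a₀ * (X^2 + Y^2)) := by field_simp
      _ ≤ (c₁/a₀) * W * ((1 + lam*av)*(X^2 + Y^2) + (X'^2 + Y'^2)) :=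
          mul_le_mul_of_nonneg_left h3 hc
  have hA2 : 2*(X*X' + Y*Y') ≤ W * ((1 + lam*av)*(X^2 + Y^2) + (X'^2 + Y'^2)) := by
    have h1 := (le_abs_self (2*(X*X' + Y*Y'))).trans hs
    linarith [h1, hNP, mul_nonneg (sub_nonneg.2 hW1) hE]
  have hA3 : 2*(X'*FR + Y'*FI) - (FR^2 + FI^2) ≤
      W * ((1 + lam*av)*(X^2 + Y^2) + (X'^2 + Y'^2)) := by
    have h1 : 2*(X'*FR + Y'*FI) - (FR^2 + FI^2) ≤ X'^2 + Y'^2 := by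
      nlinarith [sq_nonneg (X'-FR), sq_nonneg (Y'-FI)]
    have hPE : X'^2 + Y'^2 ≤ (1 + lam*av)*(X^2 + Y^2) + (X'^2 + Y'^2) := by
      nlinarith [mul_nonneg (mul_nonneg hlam (ha₀.le.trans ha1)) hn]
    linarith [h1, hPE, mul_nonneg (sub_nonneg.2 hW1) hE]
  have hA4 : -(2*qv*(X*X' + Y*Y')) ≤
      c₂ * W * ((1 + lam*av)*(X^2 + Y^2) + (X'^2 + Y'^2)) := by
    have h1 : -(2*qv*(X*X' + Y*Y')) ≤ |qv| * |2*(X*X' + Y*Y')| := by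
      calc -(2*qv*(X*X' + Y*Y')) ≤ |2*qv*(X*X' + Y*Y')| := neg_le_abs _
        _ = |qv| * |2*(X*X' + Y*Y')| := by rw [← abs_mul]; congr 1; ring
    have h2 : |qv| * |2*(X*X' + Y*Y')| ≤ (c₂ * W) * ((X^2 + Y^2) + (X'^2 + Y'^2)) :=
      mul_le_mul hq2 hs (abs_nonneg _) (by positivity)
    have h3 := mul_le_mul_of_nonneg_left hNP (show (0:ℝ) ≤ c₂ * W by positivity)
    linarith
  linarith [hA1, hA2, hA3, hA4]

private lemma step1_alg (a₀ M₁ lam av n p : ℝ) (ha₀ : 0 < a₀) (hM₁ : 1 ≤ M₁)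
    (hM₁a : 1 ≤ M₁ * a₀) (ha1 : a₀ ≤ av) (hn : 0 ≤ n) (hp : 0 ≤ p) (hlam : 0 ≤ lam) :
    (1 + lam) * n + p ≤ M₁ * ((1 + lam * av) * n + p) := by
  have hMa : 1 ≤ M₁ * av := by nlinarith
  nlinarith [mul_nonneg (sub_nonneg.2 hM₁) hn, mul_nonneg (sub_nonneg.2 hM₁) hp,
    mul_nonneg (mul_nonneg hlam hn) (sub_nonneg.2 hMa)]

private lemma step3_alg (c₁ M₂ W lam a0v n p I : ℝ) (hc₁ : 0 < c₁) (hM₂ : 1 ≤ M₂)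
    (hM₂c : c₁ ≤ M₂) (hW1 : 1 ≤ W) (ha0 : a0v ≤ c₁ * W)
    (hn : 0 ≤ n) (hp : 0 ≤ p) (hI : 0 ≤ I) (hlam : 0 ≤ lam) :
    (1 + lam * a0v) * n + p + I ≤ M₂ * W * ((1 + lam) * n + p + I) := by
  have hMW : 1 ≤ M₂ * W := by nlinarith
  have hcW : c₁ * W ≤ M₂ * W := by nlinarith
  nlinarith [mul_nonneg (sub_nonneg.2 hMW) hn, mul_nonneg (sub_nonneg.2 hMW) hp,
    mul_nonneg (sub_nonneg.2 hMW) hI,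
    mul_nonneg (mul_nonneg hlam hn) (sub_nonneg.2 (ha0.trans hcW))]

private lemma norm_sq_complex (z : ℂ) : ‖z‖^2 = z.re^2 + z.im^2 := by
  rw [Complex.sq_norm, Complex.normSq_apply]; ring

/-- Existence of very weak solutions, Fourier-mode version: there exist constants `C, K > 0`,
depending only on `T`, `ã₀`, `c₁`, `c₂` (and `L₁`, `L₂`), for which the parameterised
energy estimate holds. -/
theorem very_weak_existence_energy_estimate
    (T a₀ c₁ c₂ : ℝ) (L₁ L₂ : ℕ)
    (hT : 0 < T) (ha₀ : 0 < a₀) (hc₁ : 0 < c₁) (hc₂ : 0 < c₂) :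
    ∃ C > 0, ∃ K > 0, EnergyEstimateWith T a₀ c₁ c₂ L₁ L₂ C K := by
  obtain ⟨M₁, hM₁def⟩ : ∃ M₁ : ℝ, M₁ = max 1 (1/a₀) := ⟨_, rfl⟩
  obtain ⟨M₂, hM₂def⟩ : ∃ M₂ : ℝ, M₂ = max 1 c₁ := ⟨_, rfl⟩
  have hM₁ : (1:ℝ) ≤ M₁ := hM₁def ▸ le_max_left _ _
  have hM₂ : (1:ℝ) ≤ M₂ := hM₂def ▸ le_max_left _ _
  have hM₁a : 1 ≤ M₁ * a₀ := by
    have : 1/a₀ ≤ M₁ := hM₁def ▸ le_max_right _ _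
    calc (1:ℝ) = (1/a₀) * a₀ := by field_simp
    _ ≤ M₁ * a₀ := by nlinarith
  have hM₂c : c₁ ≤ M₂ := hM₂def ▸ le_max_right _ _
  obtain ⟨K₀, hK₀def⟩ : ∃ K₀ : ℝ, K₀ = c₁/a₀ + 2 + c₂ := ⟨_, rfl⟩
  have hK₀ : 0 < K₀ := by rw [hK₀def]; positivity
  refine ⟨M₁ * M₂, by positivity, K₀ * T + 1, by positivity, ?_⟩
  intro ω hω a a' q hderiva hab ha'b hqb lam hlam f v v' v'' hfc hv hv' hv'' heq
  obtain ⟨L, hLdef⟩ : ∃ L : ℕ, L = max (L₁ + 1) L₂ := ⟨_, rfl⟩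
  obtain ⟨W, hWdef⟩ : ∃ W : ℝ, W = ω ^ (-(L:ℤ)) := ⟨_, rfl⟩
  have hω0 : 0 < ω := hω.1
  have hω1 : ω ≤ 1 := hω.2
  have hW0 : 0 < W := hWdef ▸ zpow_pos hω0 _
  have hW1 : 1 ≤ W := hWdef ▸ one_le_zpow_of_nonpos₀ hω0 hω1 (by simp)
  have hL1 : (L₁:ℤ) + 1 ≤ L := by
    rw [hLdef]; exact_mod_cast Nat.le_max_left (L₁+1) L₂
  have hL2 : (L₂:ℤ) ≤ L := by
    rw [hLdef]; exact_mod_cast Nat.le_max_right (L₁+1) L₂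
  have hWa : ω ^ (-(L₁:ℤ) - 1) ≤ W := by
    rw [hWdef]; exact zpow_le_zpow_right_of_le_one₀ hω0 hω1 (by omega)
  have hWq : ω ^ (-(L₂:ℤ)) ≤ W := by
    rw [hWdef]; exact zpow_le_zpow_right_of_le_one₀ hω0 hω1 (by omega)
  have hWa' : ω ^ (-(L₁:ℤ)) ≤ W := by
    rw [hWdef]; exact zpow_le_zpow_right_of_le_one₀ hω0 hω1 (by omega)
  -- the mollified coefficient bounds in terms of `W`
  have ha'W : ∀ t ∈ Set.Icc (0:ℝ) T, |a' t| ≤ c₁ * W :=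
    fun t ht => (ha'b t ht).trans (by nlinarith [hWa])
  have hqW : ∀ t ∈ Set.Icc (0:ℝ) T, |q t| ≤ c₂ * W :=
    fun t ht => (hqb t ht).trans (by nlinarith [hWq])
  have haW : ∀ t ∈ Set.Icc (0:ℝ) T, a t ≤ c₁ * W :=
    fun t ht => ((hab t ht).2).trans (by nlinarith [hWa'])
  -- component energy functions
  obtain ⟨N, hNdef⟩ : ∃ N : ℝ → ℝ, N = fun s => (v s).re^2 + (v s).im^2 := ⟨_, rfl⟩
  obtain ⟨P, hPdef⟩ : ∃ P : ℝ → ℝ, P = fun s => (v' s).re^2 + (v' s).im^2 := ⟨_, rfl⟩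
  obtain ⟨E, hEdef⟩ : ∃ E : ℝ → ℝ, E = fun s => (1 + lam * a s) * N s + P s := ⟨_, rfl⟩
  obtain ⟨D, hDdef⟩ : ∃ D : ℝ → ℝ, D = fun s => lam * a' s * N s
      + (1 + lam * a s) * (2 * ((v s).re * (v' s).re + (v s).im * (v' s).im))
      + 2 * ((v' s).re * (v'' s).re + (v' s).im * (v'' s).im) := ⟨_, rfl⟩
  have hNnn : ∀ s, 0 ≤ N s := fun s => by rw [hNdef]; positivity
  have hPnn : ∀ s, 0 ≤ P s := fun s => by rw [hPdef]; positivity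
  have hEnn : ∀ t ∈ Set.Icc (0:ℝ) T, 0 ≤ E t := by
    intro t ht
    have h1 := (hab t ht).1
    have := hNnn t; have := hPnn t
    have : 0 ≤ 1 + lam * a t := by nlinarith
    rw [hEdef]
    dsimp only
    positivity
  -- derivative of the energy
  have hE' : ∀ t ∈ Set.Icc (0:ℝ) T, HasDerivAt E (D t) t := by
    intro t ht
    have hX : HasDerivAt (fun s => (v s).re) ((v' t).re) t :=
      Complex.reCLM.hasFDerivAt.comp_hasDerivAt t (hv t ht)
    have hY : HasDerivAt (fun s => (v s).im) ((v' t).im) t :=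
      Complex.imCLM.hasFDerivAt.comp_hasDerivAt t (hv t ht)
    have hX' : HasDerivAt (fun s => (v' s).re) ((v'' t).re) t :=
      Complex.reCLM.hasFDerivAt.comp_hasDerivAt t (hv' t ht)
    have hY' : HasDerivAt (fun s => (v' s).im) ((v'' t).im) t :=
      Complex.imCLM.hasFDerivAt.comp_hasDerivAt t (hv' t ht)
    have hN : HasDerivAt N (2*((v t).re*(v' t).re) + 2*((v t).im*(v' t).im)) t := by
      rw [hNdef]
      have h := ((hX.fun_pow 2).fun_add (hY.fun_pow 2))
      refine h.congr_deriv ?_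
      ring
    have hP : HasDerivAt P (2*((v' t).re*(v'' t).re) + 2*((v' t).im*(v'' t).im)) t := by
      rw [hPdef]
      have h := ((hX'.fun_pow 2).fun_add (hY'.fun_pow 2))
      refine h.congr_deriv ?_
      ring
    have haD := hderiva t ht
    have h := (((haD.const_mul lam).const_add 1).fun_mul hN).fun_add hP
    rw [hEdef]; refine h.congr_deriv ?_
    simp only [hDdef]
    ring
  -- components of the equation
  have hre : ∀ t ∈ Set.Icc (0:ℝ) T,
      (v'' t).re = (f t).re - lam * a t * (v t).re - q t * (v t).re := by
    intro t ht
    have h := heq t ht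
    have h2 : v'' t = f t - (lam:ℂ)*(a t:ℂ)*(v t) - (q t:ℂ)*(v t) := by
      linear_combination h
    rw [h2]
    simp [Complex.sub_re, Complex.mul_re, Complex.mul_im]
  have him : ∀ t ∈ Set.Icc (0:ℝ) T,
      (v'' t).im = (f t).im - lam * a t * (v t).im - q t * (v t).im := by
    intro t ht
    have h := heq t ht
    have h2 : v'' t = f t - (lam:ℂ)*(a t:ℂ)*(v t) - (q t:ℂ)*(v t) := by
      linear_combination h
    rw [h2]
    simp [Complex.sub_im, Complex.mul_re, Complex.mul_im]
  -- the forcing function, extended continuously to all of ℝ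
  obtain ⟨g, hgdef⟩ : ∃ g : ℝ → ℝ, g = fun s => ‖f (Set.projIcc 0 T hT.le s)‖^2 := ⟨_, rfl⟩
  have hgc : Continuous g := by
    rw [hgdef]
    have h1 : Continuous (fun s => f (Set.projIcc 0 T hT.le s)) :=
      hfc.restrict.comp continuous_projIcc
    exact (h1.norm.pow 2)
  have hgeq : ∀ t ∈ Set.Icc (0:ℝ) T, g t = ‖f t‖^2 := by
    intro t ht
    simp only [hgdef, Set.projIcc_of_mem hT.le ht]
  have hgnn : ∀ s, 0 ≤ g s := fun s => by rw [hgdef]; positivity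
  -- the Gronwall functional
  obtain ⟨H, hHdef⟩ : ∃ H : ℝ → ℝ,
      H = fun s => E s + ((∫ u in (0:ℝ)..T, g u) - ∫ u in (0:ℝ)..s, g u) := ⟨_, rfl⟩
  have hIg : ∀ u : ℝ, HasDerivAt (fun x => ∫ s in (0:ℝ)..x, g s) (g u) u := fun u =>
    intervalIntegral.integral_hasDerivAt_right (hgc.intervalIntegrable _ _)
      hgc.stronglyMeasurable.stronglyMeasurableAtFilter hgc.continuousAt
  have hH' : ∀ t ∈ Set.Icc (0:ℝ) T, HasDerivAt H (D t - g t) t := by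
    intro t ht
    rw [hHdef]
    have h := (hE' t ht).fun_add ((hasDerivAt_const t (∫ u in (0:ℝ)..T, g u)).fun_sub (hIg t))
    refine h.congr_deriv ?_
    ring
  have Hcont : ContinuousOn H (Set.Icc (0:ℝ) T) :=
    fun t ht => ((hH' t ht).continuousAt.continuousWithinAt)
  have hEH : ∀ t ∈ Set.Icc (0:ℝ) T, E t ≤ H t := by
    intro t ht
    have hsub : (∫ u in (0:ℝ)..T, g u) - ∫ u in (0:ℝ)..t, g u = ∫ u in t..T, g u :=
      intervalIntegral.integral_interval_sub_left (hgc.intervalIntegrable _ _)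
        (hgc.intervalIntegrable _ _)
    have hnn : 0 ≤ ∫ u in t..T, g u :=
      intervalIntegral.integral_nonneg ht.2 (fun u _ => hgnn u)
    rw [hHdef]
    dsimp only
    rw [hsub]; linarith
  -- the key differential inequality
  have key : ∀ t ∈ Set.Ico (0:ℝ) T, D t - g t ≤ (K₀ * W) * H t + 0 := by
    intro t ht'
    have ht : t ∈ Set.Icc (0:ℝ) T := Ico_subset_Icc_self ht'
    have hre' := hre t ht
    have him' := him t ht
    have ha1 := (hab t ht).1
    have ha2 := ha'W t ht
    have hq2 := hqW t ht
    have hn := hNnn t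
    have hp := hPnn t
    have hgt : g t = (f t).re^2 + (f t).im^2 := by rw [hgeq t ht, norm_sq_complex]
    have hDval : D t - g t = lam * a' t * ((v t).re^2 + (v t).im^2)
        + 2*((v t).re*(v' t).re + (v t).im*(v' t).im)
        + (2*((v' t).re*(f t).re + (v' t).im*(f t).im) - ((f t).re^2 + (f t).im^2))
        + (-(2*(q t)*((v t).re*(v' t).re + (v t).im*(v' t).im))) := by
      simp only [hDdef, hNdef, hgt]
      rw [hre', him']
      ring
    have halg := key_alg a₀ c₁ c₂ W lam (a t) (a' t) (q t) (v t).re (v t).im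
      (v' t).re (v' t).im (f t).re (f t).im ha₀ hc₁ hc₂ hW1 hlam ha1 ha2 hq2
    have hHE : E t ≤ H t := hEH t ht
    have hKWnn : 0 ≤ K₀ * W := by
      have := hK₀.le
      positivity
    have hEt := hEnn t ht
    calc D t - g t = lam * a' t * ((v t).re^2 + (v t).im^2)
        + 2*((v t).re*(v' t).re + (v t).im*(v' t).im)
        + (2*((v' t).re*(f t).re + (v' t).im*(f t).im) - ((f t).re^2 + (f t).im^2))
        + (-(2*(q t)*((v t).re*(v' t).re + (v t).im*(v' t).im))) := hDval
      _ ≤ (c₁/a₀ + 2 + c₂) * W * ((1 + lam * a t) * ((v t).re^2 + (v t).im^2)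
            + ((v' t).re^2 + (v' t).im^2)) := halg
      _ = (K₀ * W) * E t := by
          simp only [hK₀def, hEdef, hNdef, hPdef]
      _ ≤ (K₀ * W) * H t + 0 := by
          linarith [mul_le_mul_of_nonneg_left hHE hKWnn]
  -- Gronwall
  have gron : ∀ s ∈ Set.Icc (0:ℝ) T, H s ≤ H 0 * Real.exp ((K₀ * W) * s) := by
    intro s hs
    have h := le_gronwallBound_of_liminf_deriv_right_le (f := H)
      (f' := fun t => D t - g t) (δ := H 0) (K := K₀ * W) (ε := 0) (a := 0) (b := T)
      Hcont
      (fun x hx r hr =>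
        ((hH' x (Ico_subset_Icc_self hx)).hasDerivWithinAt).liminf_right_slope_le hr)
      le_rfl key s hs
    rwa [sub_zero, gronwallBound_ε0] at h
  -- final assembly
  intro t₀ ht₀
  have h0mem : (0:ℝ) ∈ Set.Icc (0:ℝ) T := ⟨le_rfl, hT.le⟩
  have hInt : ∀ t, ‖v t‖^2 = N t := fun t => by
    rw [norm_sq_complex, hNdef]
  have hInt' : ∀ t, ‖v' t‖^2 = P t := fun t => by
    rw [norm_sq_complex, hPdef]
  obtain ⟨S, hSdef⟩ : ∃ S : ℝ, S = (1 + lam) * N 0 + P 0 + ∫ u in (0:ℝ)..T, g u := ⟨_, rfl⟩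
  have hgint : (∫ τ in (0:ℝ)..T, ‖f τ‖^2) = ∫ u in (0:ℝ)..T, g u := by
    apply intervalIntegral.integral_congr
    intro u hu
    rw [Set.uIcc_of_le hT.le] at hu
    exact (hgeq u hu).symm
  have hIgnn : 0 ≤ ∫ u in (0:ℝ)..T, g u :=
    intervalIntegral.integral_nonneg hT.le (fun u _ => hgnn u)
  have hSnn : 0 ≤ S := by
    have := hNnn 0; have := hPnn 0
    simp only [hSdef]; nlinarith
  -- step 1: LHS ≤ M₁ * E t₀
  have step1 : (1 + lam) * ‖v t₀‖^2 + ‖v' t₀‖^2 ≤ M₁ * E t₀ := by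
    rw [hInt, hInt']
    have ha1 := (hab t₀ ht₀).1
    calc (1 + lam) * N t₀ + P t₀ ≤ M₁ * ((1 + lam * a t₀) * N t₀ + P t₀) :=
        step1_alg a₀ M₁ lam (a t₀) (N t₀) (P t₀) ha₀ hM₁ hM₁a ha1
          (hNnn t₀) (hPnn t₀) hlam
      _ = M₁ * E t₀ := by rw [hEdef]
  -- step 2: E t₀ ≤ H 0 * exp (K₀ W T)
  have hH0 : H 0 = E 0 + ∫ u in (0:ℝ)..T, g u := by
    simp only [hHdef, intervalIntegral.integral_same]; ring
  have hH0nn : 0 ≤ H 0 := by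
    rw [hH0]; have := hEnn 0 h0mem; linarith
  have step2 : E t₀ ≤ H 0 * Real.exp ((K₀ * W) * T) := by
    have h1 := hEH t₀ ht₀
    have h2 := gron t₀ ht₀
    have h3 : Real.exp ((K₀ * W) * t₀) ≤ Real.exp ((K₀ * W) * T) := by
      apply Real.exp_le_exp.2
      have : 0 ≤ K₀ * W := by positivity
      nlinarith [ht₀.2]
    have h4 := mul_le_mul_of_nonneg_left h3 hH0nn
    have h5 := gron 0 h0mem
    nlinarith [Real.exp_pos ((K₀ * W) * t₀)]
  -- step 3: H 0 ≤ M₂ * W * S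
  have step3 : H 0 ≤ M₂ * W * S := by
    rw [hH0]
    have ha0 := haW 0 h0mem
    calc E 0 + ∫ u in (0:ℝ)..T, g u
        = (1 + lam * a 0) * N 0 + P 0 + ∫ u in (0:ℝ)..T, g u := by rw [hEdef]
      _ ≤ M₂ * W * ((1 + lam) * N 0 + P 0 + ∫ u in (0:ℝ)..T, g u) :=
          step3_alg c₁ M₂ W lam (a 0) (N 0) (P 0) _ hc₁ hM₂ hM₂c hW1 ha0
            (hNnn 0) (hPnn 0) hIgnn hlam
      _ = M₂ * W * S := by rw [hSdef]
  -- step 4: combine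
  have hWexp : W ≤ Real.exp W := by
    nlinarith [Real.add_one_le_exp W]
  have hexp1 : 0 < Real.exp ((K₀ * W) * T) := Real.exp_pos _
  have final : (1 + lam) * ‖v t₀‖^2 + ‖v' t₀‖^2 ≤
      (M₁ * M₂) * Real.exp ((K₀ * T + 1) * W) * S := by
    have c1 : (1 + lam) * ‖v t₀‖^2 + ‖v' t₀‖^2 ≤ M₁ * (H 0 * Real.exp ((K₀ * W) * T)) := by
      calc (1 + lam) * ‖v t₀‖^2 + ‖v' t₀‖^2 ≤ M₁ * E t₀ := step1
        _ ≤ M₁ * (H 0 * Real.exp ((K₀ * W) * T)) :=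
          mul_le_mul_of_nonneg_left step2 (by linarith)
    have c2 : M₁ * (H 0 * Real.exp ((K₀ * W) * T)) ≤
        M₁ * ((M₂ * W * S) * Real.exp ((K₀ * W) * T)) :=
      mul_le_mul_of_nonneg_left (mul_le_mul_of_nonneg_right step3 hexp1.le) (by linarith)
    have c3 : M₁ * ((M₂ * W * S) * Real.exp ((K₀ * W) * T)) ≤
        M₁ * ((M₂ * Real.exp W * S) * Real.exp ((K₀ * W) * T)) := by
      have hM₂0 : (0:ℝ) ≤ M₂ := by linarith
      have hin : M₂ * W * S ≤ M₂ * Real.exp W * S := by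
        nlinarith [mul_nonneg hM₂0 hSnn]
      exact mul_le_mul_of_nonneg_left (mul_le_mul_of_nonneg_right hin hexp1.le)
        (by linarith)
    have c4 : M₁ * ((M₂ * Real.exp W * S) * Real.exp ((K₀ * W) * T)) =
        (M₁ * M₂) * Real.exp ((K₀ * T + 1) * W) * S := by
      rw [show (K₀ * T + 1) * W = (K₀ * W) * T + W by ring, Real.exp_add]
      ring
    linarith [c1, c2, c3, c4.le, c4.ge]
  calc (1 + lam) * ‖v t₀‖^2 + ‖v' t₀‖^2 ≤
      (M₁ * M₂) * Real.exp ((K₀ * T + 1) * W) * S := final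
    _ = M₁ * M₂ * Real.exp ((K₀ * T + 1) * ω ^ (-((max (L₁ + 1) L₂ : ℕ) : ℤ))) *
        ((1 + lam) * ‖v 0‖ ^ 2 + ‖v' 0‖ ^ 2 + ∫ τ in (0:ℝ)..T, ‖f τ‖ ^ 2) := by
      rw [hSdef, hgint, hInt 0, hInt' 0, hWdef, hLdef]
end
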